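/- arXiv:2007.08771 — 5 statements merged into one kernel-verified Lean document; each statement's English description precedes it below -/
import Mathlib

section
/- For any nonnegative integer k and positive integer ℓ, there exists a positive integer N such that: if G is a graph having a vertex-cover of size at most k, then for every positive integer m, every m-coloring of G^ℓ has all monochromatic components of weak diameter in G^ℓ at most N. -/
open SimpleGraph

/-- The ℓ-th power of a graph: distinct vertices are adjacent iff their
distance in `G` is at most `ℓ` (using the extended distance, so unreachable
pairs are non-adjacent). -/
def SimpleGraph.pow {V : Type} (G : SimpleGraph V) (ℓ : ℕ) : SimpleGraph V where
  Adj u v := u ≠ v ∧ G.edist u v ≤ ℓ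
  symm := by
    constructor
    intro u v h
    exact ⟨h.1.symm, by rw [SimpleGraph.edist_comm]; exact h.2⟩
  loopless := by constructor; intro v h; exact h.1 rfl

/-- `MonoReach H c u v` : `u` and `v` lie in the same `c`-monochromatic
component of `H` (joined by a walk all of whose vertices get the same color). -/
def MonoReach {V : Type} {α : Type} (H : SimpleGraph V) (c : V → α) : V → V → Prop :=
  Relation.ReflTransGen (fun a b => H.Adj a b ∧ c a = c b)

/-- `N_G^{≤ r}[S]` : vertices joined to `S` by a path of length at most `r`. -/
def ballSet {V : Type} (G : SimpleGraph V) (S : Set V) (r : ℕ) : Set V :=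
  {v | ∃ s ∈ S, G.edist s v ≤ r}

/-- Tree-decomposition of `G` with tree `Tg` and bags `bag`. -/
def IsTreeDecomp {V T : Type} (G : SimpleGraph V) (Tg : SimpleGraph T) (bag : T → Set V) : Prop :=
  Tg.Connected ∧ Tg.IsAcyclic ∧
  (∀ v, ∃ t, v ∈ bag t) ∧
  (∀ u v, G.Adj u v → ∃ t, u ∈ bag t ∧ v ∈ bag t) ∧
  (∀ v, (Tg.induce {t | v ∈ bag t}).Preconnected)

/-- A layering of `G`: every edge joins two consecutive layers. -/
def IsLayering {V : Type} (G : SimpleGraph V) (L : V → ℕ) : Prop :=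
  ∀ u v, G.Adj u v → L u ≤ L v + 1 ∧ L v ≤ L u + 1

/-- Layered tree-width at most `w`. -/
def LayeredTreewidthLE (V : Type) (G : SimpleGraph V) (w : ℕ) : Prop :=
  ∃ (T : Type) (Tg : SimpleGraph T) (bag : T → Set V) (L : V → ℕ),
    IsTreeDecomp G Tg bag ∧ IsLayering G L ∧
    ∀ t i, (bag t ∩ L ⁻¹' {i}).encard ≤ w

private lemma cover_key {V : Type} {G : SimpleGraph V} {S : Set V} [DecidablePred (· ∈ S)]
    (hcov : ∀ u v, G.Adj u v → u ∈ S ∨ v ∈ S) :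
    ∀ {a b : V} (q : G.Walk a b),
      q.length + (if a ∈ S then 1 else 0) ≤
        2 * (q.support.filter (fun x => x ∈ S)).length + 1 := by
  intro a b q
  induction q with
  | nil =>
    rename_i x
    by_cases h : x ∈ S <;> simp [h]
  | @cons a w b hadj q ih =>
    by_cases ha : a ∈ S
    · simp [ha, List.filter_cons]
      by_cases hw : w ∈ S <;> simp [hw] at ih <;> omega
    · have hw : w ∈ S := (hcov _ _ hadj).resolve_left ha
      simp [ha, hw, List.filter_cons] at ih ⊢
      omega

private lemma cover_walk_len {V : Type} (G : SimpleGraph V) (S : Set V) (k : ℕ)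
    (hS : S.encard ≤ (k : ℕ∞)) (hcov : ∀ u v, G.Adj u v → u ∈ S ∨ v ∈ S)
    {u v : V} (p : G.Walk u v) (hp : p.IsPath) : p.length ≤ 2 * k + 1 := by
  classical
  have hks : ((p.support.filter (fun x => x ∈ S)).length : ℕ∞) ≤ (k : ℕ∞) := by
    have hnd : (p.support.filter (fun x => x ∈ S)).Nodup := hp.support_nodup.filter _
    have hsub : ↑(p.support.filter (fun x => x ∈ S)).toFinset ⊆ S := by
      intro x hx
      simp only [List.coe_toFinset, List.mem_filter, decide_eq_true_eq] at hx
      exact hx.2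
    calc ((p.support.filter (fun x => x ∈ S)).length : ℕ∞)
        = (↑(p.support.filter (fun x => x ∈ S)).toFinset : Set V).encard := by
          rw [Set.encard_coe_eq_coe_finsetCard, List.toFinset_card_of_nodup hnd]
      _ ≤ S.encard := Set.encard_mono hsub
      _ ≤ k := hS
  have hk : (p.support.filter (fun x => x ∈ S)).length ≤ k := by exact_mod_cast hks
  have hkey := cover_key hcov p
  by_cases h : u ∈ S <;> simp [h] at hkey <;> omega

/-- If `G` has a vertex-cover of size at most `k`, then every coloring of
`G^ℓ` has all monochromatic components of weak diameter in `G^ℓ` at most `N`,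
for some `N` depending only on `k, ℓ`. -/
theorem stmt6 (k ℓ : ℕ) (hℓ : 0 < ℓ) :
    ∃ N : ℕ, 0 < N ∧
      ∀ {V : Type} (G : SimpleGraph V) (S : Set V),
        S.encard ≤ (k : ℕ∞) → (∀ u v, G.Adj u v → u ∈ S ∨ v ∈ S) →
        ∀ (m : ℕ), 0 < m → ∀ (c : V → Fin m),
          ∀ u v, MonoReach (G.pow ℓ) c u v → (G.pow ℓ).edist u v ≤ (N : ℕ∞) := by
  refine ⟨2 * k + 1, by omega, ?_⟩
  intro V G S hS hcov m hm c u v hmr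
  classical
  have hle : G ≤ G.pow ℓ := by
    intro a b hab
    exact ⟨hab.ne, by
      calc G.edist a b ≤ 1 := le_of_eq (SimpleGraph.edist_eq_one_iff_adj.mpr hab)
        _ ≤ (ℓ : ℕ∞) := by exact_mod_cast hℓ⟩
  have hreach : G.Reachable u v := by
    induction hmr with
    | refl => exact SimpleGraph.Reachable.refl u
    | tail _ hbc ih =>
      refine ih.trans (SimpleGraph.reachable_of_edist_ne_top ?_)
      intro h
      have h2 := hbc.1.2
      rw [h] at h2
      exact absurd h2 (by simp)
  obtain ⟨w, -⟩ := hreach.exists_walk_length_eq_edist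
  have hpath := w.toPath
  have hlen : (hpath : G.Walk u v).length ≤ 2 * k + 1 :=
    cover_walk_len G S k hS hcov _ hpath.2
  calc (G.pow ℓ).edist u v ≤ G.edist u v := SimpleGraph.edist_anti hle
    _ ≤ ((hpath : G.Walk u v).length : ℕ∞) := SimpleGraph.edist_le _
    _ ≤ ((2 * k + 1 : ℕ) : ℕ∞) := by exact_mod_cast hlen
end

section
/- For any positive integers ℓ, N and nonnegative integer n, there exists N* with the following property: for every positive integer m, if F is a class of graphs such that every G ∈ F admits an m-coloring of G^ℓ with weak diameter in G^ℓ at most N, then every graph H for which there exists Z ⊆ V(H) with |Z| ≤ n and H − Z ∈ F admits an m-coloring of H^ℓ with weak diameter in H^ℓ at most N*. -/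
open SimpleGraph

private lemma aux_edist_hom_le {A B : Type} {GA : SimpleGraph A} {GB : SimpleGraph B}
    (f : GA →g GB) (u v : A) : GB.edist (f u) (f v) ≤ GA.edist u v := by
  by_cases h : GA.edist u v = ⊤
  · simp [h]
  · obtain ⟨p, hp⟩ := SimpleGraph.exists_walk_of_edist_ne_top h
    calc GB.edist (f u) (f v) ≤ ((p.map f).length : ℕ∞) := SimpleGraph.edist_le _
      _ = (p.length : ℕ∞) := by rw [SimpleGraph.Walk.length_map]
      _ = GA.edist u v := hp

private lemma aux_adj_edist_le_one {V : Type} {G : SimpleGraph V} {a b : V} (h : G.Adj a b) :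
    G.edist a b ≤ 1 := by
  have := SimpleGraph.edist_le h.toWalk
  simpa using this

private lemma aux_pow_edist_le_one {V : Type} {H : SimpleGraph V} {ℓ : ℕ} {a b : V}
    (h : H.edist a b ≤ (ℓ : ℕ∞)) : (H.pow ℓ).edist a b ≤ 1 := by
  rcases eq_or_ne a b with rfl | hne
  · simp [SimpleGraph.edist_self]
  · exact aux_adj_edist_le_one ⟨hne, h⟩

private def inducedHom {V : Type} (H : SimpleGraph V) (S : Set V) : H.induce S →g H :=
  ⟨Subtype.val, fun h => h⟩

private def powHom {V : Type} (H : SimpleGraph V) (S : Set V) (ℓ : ℕ) :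
    (H.induce S).pow ℓ →g H.pow ℓ where
  toFun := Subtype.val
  map_rel' := by
    intro a b h
    exact ⟨fun e => h.1 (Subtype.ext e), le_trans (aux_edist_hom_le (inducedHom H S) a b) h.2⟩

private lemma aux_edist_induce {V : Type} {H : SimpleGraph V} {S : Set V} :
    ∀ {u v : V} (p : H.Walk u v), (∀ x ∈ p.support, x ∈ S) → ∀ (hu : u ∈ S) (hv : v ∈ S),
    (H.induce S).edist ⟨u, hu⟩ ⟨v, hv⟩ ≤ (p.length : ℕ∞) := by
  intro u v p
  induction p with
  | nil => intro _ hu hv; simp [SimpleGraph.edist_self]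
  | @cons u a v h q ih =>
    intro hs hu hv
    have ha : a ∈ S := hs a (by simp)
    have h1 : (H.induce S).Adj ⟨u, hu⟩ ⟨a, ha⟩ := h
    calc (H.induce S).edist ⟨u, hu⟩ ⟨v, hv⟩
        ≤ (H.induce S).edist ⟨u, hu⟩ ⟨a, ha⟩ + (H.induce S).edist ⟨a, ha⟩ ⟨v, hv⟩ :=
          SimpleGraph.edist_triangle
      _ ≤ 1 + (q.length : ℕ∞) :=
          add_le_add (aux_adj_edist_le_one h1) (ih (fun x hx => hs x (by simp [hx])) ha hv)
      _ = (((SimpleGraph.Walk.cons h q).length : ℕ) : ℕ∞) := by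
          rw [SimpleGraph.Walk.length_cons]; push_cast; ring

private lemma aux_crossing {V : Type} {H : SimpleGraph V} {Z : Set V} {ℓ : ℕ} {v w : V}
    (hadj : (H.pow ℓ).Adj v w) (hv : v ∉ Z) (hw : w ∉ Z) :
    ((H.induce {x | x ∉ Z}).pow ℓ).Adj ⟨v, hv⟩ ⟨w, hw⟩ ∨
      ∃ z ∈ Z, H.edist v z ≤ (ℓ : ℕ∞) ∧ H.edist z w ≤ (ℓ : ℕ∞) := by
  classical
  obtain ⟨hne, hd⟩ := hadj
  have hnt : H.edist v w ≠ ⊤ := fun h => by simp [h] at hd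
  obtain ⟨p, hp⟩ := SimpleGraph.exists_walk_of_edist_ne_top hnt
  have hpl : (p.length : ℕ∞) ≤ (ℓ : ℕ∞) := hp ▸ hd
  by_cases hall : ∀ x ∈ p.support, x ∉ Z
  · exact Or.inl ⟨fun e => hne (congrArg Subtype.val e),
      le_trans (aux_edist_induce p hall hv hw) hpl⟩
  · right
    push_neg at hall
    obtain ⟨z, hzsup, hz⟩ := hall
    refine ⟨z, hz, ?_, ?_⟩
    · exact le_trans (SimpleGraph.edist_le (p.takeUntil z hzsup))
        (le_trans (Nat.cast_le.mpr (SimpleGraph.Walk.length_takeUntil_le p hzsup)) hpl)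
    · exact le_trans (SimpleGraph.edist_le (p.dropUntil z hzsup))
        (le_trans (Nat.cast_le.mpr (SimpleGraph.Walk.length_dropUntil_le p hzsup)) hpl)

private lemma aux_walk_bound {A V : Type} {K : SimpleGraph A} {G : SimpleGraph V} (f : A → V)
    (C : ℕ) (hK : ∀ a b, K.Adj a b → G.edist (f a) (f b) ≤ (C : ℕ∞)) :
    ∀ {z z' : A} (p : K.Walk z z'), G.edist (f z) (f z') ≤ ((C * p.length : ℕ) : ℕ∞) := by
  intro z z' p
  induction p with
  | nil => simp [SimpleGraph.edist_self]
  | @cons a b c h q ih =>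
    calc G.edist (f a) (f c) ≤ G.edist (f a) (f b) + G.edist (f b) (f c) :=
        SimpleGraph.edist_triangle
      _ ≤ (C : ℕ∞) + ((C * q.length : ℕ) : ℕ∞) := add_le_add (hK _ _ h) ih
      _ = ((C * (SimpleGraph.Walk.cons h q).length : ℕ) : ℕ∞) := by
          rw [SimpleGraph.Walk.length_cons]; push_cast; ring

private def nearGraph {V : Type} (G : SimpleGraph V) (Z : Set V) (C : ℕ) : SimpleGraph ↥Z :=
  SimpleGraph.fromRel (fun a b => G.edist ↑a ↑b ≤ (C : ℕ∞))

private lemma nearGraph_adj_le {V : Type} {G : SimpleGraph V} {Z : Set V} {C : ℕ} {a b : ↥Z}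
    (h : (nearGraph G Z C).Adj a b) : G.edist ↑a ↑b ≤ (C : ℕ∞) := by
  rcases h with ⟨ne, h | h⟩
  · exact h
  · rwa [SimpleGraph.edist_comm]

private lemma nearGraph_reachable {V : Type} {G : SimpleGraph V} {Z : Set V} {C : ℕ} {a b : ↥Z}
    (h : G.edist ↑a ↑b ≤ (C : ℕ∞)) : (nearGraph G Z C).Reachable a b := by
  rcases eq_or_ne a b with rfl | hne
  · exact SimpleGraph.Reachable.refl _
  · exact SimpleGraph.Adj.reachable ((SimpleGraph.fromRel_adj _ _ _).mpr ⟨hne, Or.inl h⟩)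

/-- Adding at most `n` apex vertices preserves the existence of `m`-colorings
of the `ℓ`-th power with bounded weak diameter (with the bound worsening from
`N` to some `N*` depending only on `ℓ, N, n`). -/
theorem stmt7 (ℓ N n : ℕ) (hℓ : 0 < ℓ) (hN : 0 < N) :
    ∃ N' : ℕ, N ≤ N' ∧
      ∀ (m : ℕ), 0 < m →
      ∀ (F : {V : Type} → SimpleGraph V → Prop),
        (∀ {V : Type} (G : SimpleGraph V), F G →
          ∃ c : V → Fin m, ∀ u v, MonoReach (G.pow ℓ) c u v →
            (G.pow ℓ).edist u v ≤ (N : ℕ∞)) →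
        ∀ {V : Type} (H : SimpleGraph V) (Z : Set V),
          Z.encard ≤ (n : ℕ∞) → F (H.induce {v | v ∉ Z}) →
          ∃ c : V → Fin m, ∀ u v, MonoReach (H.pow ℓ) c u v →
            (H.pow ℓ).edist u v ≤ (N' : ℕ∞) := by
  refine ⟨(n + 2) * (N + 2), by nlinarith, ?_⟩
  intro m hm F hF V H Z hZ hFG
  classical
  obtain ⟨c0, hc0⟩ := hF _ hFG
  refine ⟨fun v => if h : v ∈ Z then (⟨0, hm⟩ : Fin m) else c0 ⟨v, h⟩, ?_⟩
  set c : V → Fin m := fun v => if h : v ∈ Z then (⟨0, hm⟩ : Fin m) else c0 ⟨v, h⟩ with hcdef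
  have hcval : ∀ (v : V) (h : v ∉ Z), c v = c0 ⟨v, h⟩ := fun v h => dif_neg h
  -- notation
  have key : ∀ (a b : ↥{v | v ∉ Z}), MonoReach ((H.induce {v | v ∉ Z}).pow ℓ) c0 a b →
      (H.pow ℓ).edist ↑a ↑b ≤ (N : ℕ∞) :=
    fun a b h => le_trans (aux_edist_hom_le (powHom H _ ℓ) a b) (hc0 a b h)
  set K : SimpleGraph ↥Z := nearGraph (H.pow ℓ) Z (N + 2) with hKdef
  have kstep : ∀ (a b : ↥Z), (H.pow ℓ).edist ↑a ↑b ≤ ((N + 2 : ℕ) : ℕ∞) → K.Reachable a b :=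
    fun a b h => nearGraph_reachable h
  -- bound from the tail invariant
  have tailD : ∀ (z' : ↥Z) (b : V),
      ((z' : V) = b ∨ (∃ (hb : b ∉ Z) (a : ↥{v | v ∉ Z}),
        MonoReach ((H.induce {v | v ∉ Z}).pow ℓ) c0 a ⟨b, hb⟩ ∧
        (H.pow ℓ).edist ↑z' ↑a ≤ 1)) →
      (H.pow ℓ).edist ↑z' b ≤ ((N + 1 : ℕ) : ℕ∞) := by
    rintro z' b (rfl | ⟨hb, a, mr, hDa⟩)
    · simp [SimpleGraph.edist_self]
    · calc (H.pow ℓ).edist ↑z' b ≤ (H.pow ℓ).edist ↑z' ↑a + (H.pow ℓ).edist ↑a b :=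
          SimpleGraph.edist_triangle
        _ ≤ 1 + (N : ℕ∞) := add_le_add hDa (key a ⟨b, hb⟩ mr)
        _ = ((N + 1 : ℕ) : ℕ∞) := by push_cast; ring
  intro u v hr
  have main : ∀ (v : V), MonoReach (H.pow ℓ) c u v →
      (∃ (hu : u ∉ Z) (hv : v ∉ Z),
        MonoReach ((H.induce {v | v ∉ Z}).pow ℓ) c0 ⟨u, hu⟩ ⟨v, hv⟩) ∨
      (∃ z z' : ↥Z, K.Reachable z z' ∧ (H.pow ℓ).edist u ↑z ≤ ((N + 1 : ℕ) : ℕ∞) ∧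
        ((z' : V) = v ∨ (∃ (hv : v ∉ Z) (a : ↥{v | v ∉ Z}),
          MonoReach ((H.induce {v | v ∉ Z}).pow ℓ) c0 a ⟨v, hv⟩ ∧
          (H.pow ℓ).edist ↑z' ↑a ≤ 1))) := by
    intro w hw
    have hw' : Relation.ReflTransGen (fun a b => (H.pow ℓ).Adj a b ∧ c a = c b) u w := hw
    clear hw
    induction hw' with
    | refl =>
      by_cases hu : u ∈ Z
      · exact Or.inr ⟨⟨u, hu⟩, ⟨u, hu⟩, SimpleGraph.Reachable.refl _,
          by simp [SimpleGraph.edist_self], Or.inl rfl⟩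
      · exact Or.inl ⟨hu, hu, Relation.ReflTransGen.refl⟩
    | @tail b w hub hstep ih =>
      -- analyze the step from b to w
      have step2 : (∃ (hb' : b ∉ Z) (hw' : w ∉ Z),
          ((H.induce {v | v ∉ Z}).pow ℓ).Adj ⟨b, hb'⟩ ⟨w, hw'⟩ ∧ c0 ⟨b, hb'⟩ = c0 ⟨w, hw'⟩) ∨
          (∃ z'' : ↥Z, (H.pow ℓ).edist b ↑z'' ≤ 1 ∧ (H.pow ℓ).edist ↑z'' w ≤ 1) := by
        by_cases hb : b ∈ Z
        · exact Or.inr ⟨⟨b, hb⟩, by simp [SimpleGraph.edist_self],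
            aux_adj_edist_le_one hstep.1⟩
        · by_cases hwz : w ∈ Z
          · exact Or.inr ⟨⟨w, hwz⟩, aux_adj_edist_le_one hstep.1,
              by simp [SimpleGraph.edist_self]⟩
          · rcases aux_crossing hstep.1 hb hwz with hGadj | ⟨z, hz, h1, h2⟩
            · refine Or.inl ⟨hb, hwz, hGadj, ?_⟩
              rw [← hcval b hb, ← hcval w hwz]; exact hstep.2
            · exact Or.inr ⟨⟨z, hz⟩, aux_pow_edist_le_one h1, aux_pow_edist_le_one h2⟩
      rcases step2 with ⟨hb', hw', hGadj, hcol⟩ | ⟨z'', hD1, hD2⟩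
      · -- monochromatic edge inside the induced graph
        rcases ih with ⟨hu, hb'', mr⟩ | ⟨z, z', hKr, hDu, htail⟩
        · exact Or.inl ⟨hu, hw', mr.tail ⟨hGadj, hcol⟩⟩
        · rcases htail with heq | ⟨hb'', a, mr, hDa⟩
          · exact absurd (heq ▸ z'.2) hb'
          · exact Or.inr ⟨z, z', hKr, hDu, Or.inr ⟨hw', a, mr.tail ⟨hGadj, hcol⟩, hDa⟩⟩
      · -- crossing step through z''
        -- first obtain the head data up to z''
        have head : ∃ z : ↥Z, K.Reachable z z'' ∧
            (H.pow ℓ).edist u ↑z ≤ ((N + 1 : ℕ) : ℕ∞) := by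
          rcases ih with ⟨hu, hb', mr⟩ | ⟨z, z', hKr, hDu, htail⟩
          · refine ⟨z'', SimpleGraph.Reachable.refl _, ?_⟩
            calc (H.pow ℓ).edist u ↑z'' ≤ (H.pow ℓ).edist u b + (H.pow ℓ).edist b ↑z'' :=
                SimpleGraph.edist_triangle
              _ ≤ (N : ℕ∞) + 1 := add_le_add (key ⟨u, hu⟩ ⟨b, hb'⟩ mr) hD1
              _ = ((N + 1 : ℕ) : ℕ∞) := by push_cast; ring
          · refine ⟨z, ?_, hDu⟩
            refine hKr.trans (kstep z' z'' ?_)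
            calc (H.pow ℓ).edist ↑z' ↑z'' ≤ (H.pow ℓ).edist ↑z' b + (H.pow ℓ).edist b ↑z'' :=
                SimpleGraph.edist_triangle
              _ ≤ ((N + 1 : ℕ) : ℕ∞) + 1 := add_le_add (tailD z' b htail) hD1
              _ = ((N + 2 : ℕ) : ℕ∞) := by push_cast; ring
        obtain ⟨z, hKr, hDu⟩ := head
        by_cases hwz : w ∈ Z
        · refine Or.inr ⟨z, ⟨w, hwz⟩, hKr.trans (kstep z'' ⟨w, hwz⟩ ?_), hDu, Or.inl rfl⟩
          exact le_trans hD2 (by exact_mod_cast le_trans one_le_two (by norm_num))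
        · exact Or.inr ⟨z, z'', hKr, hDu,
            Or.inr ⟨hwz, ⟨w, hwz⟩, Relation.ReflTransGen.refl, hD2⟩⟩
  -- finalize
  rcases main v hr with ⟨hu, hv, mr⟩ | ⟨z, z', hKr, hDu, htail⟩
  · exact le_trans (key ⟨u, hu⟩ ⟨v, hv⟩ mr) (Nat.cast_le.mpr (by nlinarith))
  · -- Z is finite with at most n elements
    have hfin : Z.Finite := Set.finite_of_encard_le_coe hZ
    haveI : Fintype ↥Z := hfin.fintype
    have hcard : Fintype.card ↥Z ≤ n := by
      have h1 : Z.encard = (Fintype.card ↥Z : ℕ∞) := by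
        rw [Set.encard_eq_coe_toFinset_card, Set.toFinset_card]
      rw [h1] at hZ
      exact_mod_cast hZ
    obtain ⟨wlk⟩ := hKr
    set p := wlk.toPath with hp
    have hlen : p.1.length < Fintype.card ↥Z := p.2.length_lt
    have hL : p.1.length ≤ n := le_trans (Nat.le_of_lt hlen) hcard
    have hzz' : (H.pow ℓ).edist ↑z ↑z' ≤ (((N + 2) * p.1.length : ℕ) : ℕ∞) :=
      aux_walk_bound Subtype.val (N + 2) (fun a b h => nearGraph_adj_le h) p.1
    have hDz'v : (H.pow ℓ).edist ↑z' v ≤ ((N + 1 : ℕ) : ℕ∞) := tailD z' v htail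
    calc (H.pow ℓ).edist u v
        ≤ (H.pow ℓ).edist u ↑z' + (H.pow ℓ).edist ↑z' v := SimpleGraph.edist_triangle
      _ ≤ ((H.pow ℓ).edist u ↑z + (H.pow ℓ).edist ↑z ↑z') + (H.pow ℓ).edist ↑z' v :=
          add_le_add_left SimpleGraph.edist_triangle _
      _ ≤ (((N + 1 : ℕ) : ℕ∞) + (((N + 2) * p.1.length : ℕ) : ℕ∞)) + ((N + 1 : ℕ) : ℕ∞) :=
          add_le_add (add_le_add hDu hzz') hDz'v
      _ ≤ (((n + 2) * (N + 2) : ℕ) : ℕ∞) := by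
          rw [← Nat.cast_add, ← Nat.cast_add]
          exact Nat.cast_le.mpr (by nlinarith)
end

section
/- Let p be a positive integer. Suppose H is a graph of layered tree-width at most p, and G is obtained from H by adding new vertices and new edges incident with new vertices such that the neighborhood of each new vertex is contained in a clique of H. Then G has layered tree-width at most p + 1. -/
open SimpleGraph

section TreeHelpers
variable {T : Type} {Tg : SimpleGraph T}

lemma myPath_append {u v w : T} {p : Tg.Walk u v} {q : Tg.Walk v w}
    (hp : p.IsPath) (hq : q.IsPath)
    (hdisj : ∀ y, y ∈ p.support → y ∈ q.support → y = v) :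
    (p.append q).IsPath := by
  rw [Walk.isPath_def, Walk.support_append]
  refine List.Nodup.append hp.support_nodup ?_ ?_
  · have := hq.support_nodup
    rw [q.support_eq_cons] at this
    exact this.of_cons
  · intro y hyp hyq
    have hy : y ∈ q.support := by rw [q.support_eq_cons]; exact List.mem_cons_of_mem _ hyq
    have : y = v := hdisj y hyp hy
    subst this
    have := hq.support_nodup
    rw [q.support_eq_cons] at this
    exact (List.nodup_cons.mp this).1 hyq

lemma path_support_subset_walk (hac : Tg.IsAcyclic) {u v : T} {p w : Tg.Walk u v}
    (hp : p.IsPath) : p.support ⊆ w.support := by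
  classical
  have : (⟨p, hp⟩ : Tg.Path u v) = ⟨w.bypass, w.bypass_isPath⟩ :=
    isAcyclic_iff_path_unique.mp hac _ _
  have hpw : p = w.bypass := congrArg Subtype.val this
  rw [hpw]
  exact w.support_bypass_subset

lemma exists_first_in_set (S : Set T) {s t : T} (w : Tg.Walk s t) (ht : t ∈ S) :
    ∃ (x : T) (p : Tg.Walk s x), p.IsPath ∧ x ∈ S ∧ ∀ y ∈ p.support, y ∈ S → y = x := by
  classical
  induction w with
  | nil => exact ⟨_, Walk.nil, Walk.IsPath.nil, ht, by simp⟩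
  | cons h w ih =>
    rename_i a b c
    by_cases ha : a ∈ S
    · exact ⟨a, Walk.nil, Walk.IsPath.nil, ha, by simp⟩
    · obtain ⟨x, p, hp, hx, hfirst⟩ := ih ht
      refine ⟨x, (Walk.cons h p).bypass, Walk.bypass_isPath _, hx, ?_⟩
      intro y hy hyS
      have := (Walk.cons h p).support_bypass_subset hy
      rw [Walk.support_cons] at this
      rcases List.mem_cons.mp this with rfl | hmem
      · exact absurd hyS ha
      · exact hfirst y hmem hyS

lemma walk_in_set {S : Set T} (hpre : (Tg.induce S).Preconnected) {s t : T}
    (hs : s ∈ S) (ht : t ∈ S) : ∃ w : Tg.Walk s t, ∀ y ∈ w.support, y ∈ S := by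
  obtain ⟨w0⟩ := hpre ⟨s, hs⟩ ⟨t, ht⟩
  refine ⟨(w0.map (SimpleGraph.Embedding.induce S).toHom), ?_⟩
  intro y hy
  replace hy : y ∈ (w0.map (SimpleGraph.Embedding.induce S).toHom).support := hy
  rw [Walk.support_map] at hy
  obtain ⟨z, _, rfl⟩ := List.mem_map.mp hy
  exact z.2

lemma helly {W : Type} (hconn : Tg.Connected) (hac : Tg.IsAcyclic) (bag : T → Set W)
    (hpre : ∀ v : W, (Tg.induce {t | v ∈ bag t}).Preconnected) (K : Finset W)
    (hpair : ∀ u ∈ K, ∀ v ∈ K, ∃ t, u ∈ bag t ∧ v ∈ bag t) :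
    ∃ t, ∀ u ∈ K, u ∈ bag t := by
  classical
  induction K using Finset.induction_on with
  | empty => exact ⟨hconn.nonempty.some, by simp⟩
  | insert _ _ hvK =>
    rename_i v K' ih
    obtain ⟨t1, ht1⟩ := ih (fun u hu w hw =>
      hpair u (Finset.mem_insert_of_mem hu) w (Finset.mem_insert_of_mem hw))
    by_cases hvt1 : v ∈ bag t1
    · refine ⟨t1, fun u hu => ?_⟩
      rcases Finset.mem_insert.mp hu with rfl | hu
      · exact hvt1
      · exact ht1 u hu
    · obtain ⟨tv, htv, -⟩ := hpair v (Finset.mem_insert_self v K') v (Finset.mem_insert_self v K')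
      set Sv : Set T := {t | v ∈ bag t} with hSv
      obtain ⟨w0⟩ := hconn t1 tv
      obtain ⟨x, P, hP, hxSv, hfirst⟩ := exists_first_in_set Sv w0 htv
      refine ⟨x, fun u hu => ?_⟩
      rcases Finset.mem_insert.mp hu with rfl | hu
      · exact hxSv
      · obtain ⟨tu, hutu, hvtu⟩ := hpair u (Finset.mem_insert_of_mem hu) v
          (Finset.mem_insert_self v K')
        set Su : Set T := {t | u ∈ bag t} with hSu
        have ht1Su : t1 ∈ Su := ht1 u hu
        obtain ⟨w1, hw1⟩ := walk_in_set (hpre u) ht1Su hutu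
        obtain ⟨R, hR⟩ := walk_in_set (hpre v) hxSv (show tu ∈ Sv from hvtu)
        have hRb : R.bypass.IsPath := R.bypass_isPath
        have hRbS : ∀ y ∈ R.bypass.support, y ∈ Sv := fun y hy =>
          hR y (R.support_bypass_subset hy)
        have hQ : (P.append R.bypass).IsPath :=
          myPath_append hP hRb (fun y hyP hyR => hfirst y hyP (hRbS y hyR))
        have hsub : (P.append R.bypass).support ⊆ w1.support :=
          path_support_subset_walk hac hQ
        have hxmem : x ∈ (P.append R.bypass).support := by
          rw [Walk.mem_support_append_iff]
          left; exact P.end_mem_support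
        exact hw1 x (hsub hxmem)
end TreeHelpers

def attachLeaves {T A : Type} (Tg : SimpleGraph T) (τ : A → T) : SimpleGraph (T ⊕ A) where
  Adj x y := match x, y with
    | .inl s, .inl t => Tg.Adj s t
    | .inl t, .inr a => t = τ a
    | .inr a, .inl t => t = τ a
    | .inr _, .inr _ => False
  symm := by
    constructor
    intro x y h
    cases x <;> cases y <;> simp_all <;> exact h.symm
  loopless := by
    constructor
    intro x h
    cases x
    · exact Tg.loopless.irrefl _ h
    · exact h

section AttachLeaves
variable {T A : Type} {Tg : SimpleGraph T} {τ : A → T}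

@[simp] lemma attachLeaves_adj_inl_inl {s t : T} :
    (attachLeaves Tg τ).Adj (.inl s) (.inl t) ↔ Tg.Adj s t := Iff.rfl

@[simp] lemma attachLeaves_adj_inr_inl {a : A} {t : T} :
    (attachLeaves Tg τ).Adj (.inr a) (.inl t) ↔ t = τ a := Iff.rfl

@[simp] lemma attachLeaves_adj_inl_inr {a : A} {t : T} :
    (attachLeaves Tg τ).Adj (.inl t) (.inr a) ↔ t = τ a := Iff.rfl

@[simp] lemma attachLeaves_adj_inr_inr {a b : A} :
    ¬ (attachLeaves Tg τ).Adj (.inr a) (.inr b) := fun h => h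

def inlHom (Tg : SimpleGraph T) (τ : A → T) : Tg →g attachLeaves Tg τ where
  toFun := Sum.inl
  map_rel' := fun h => h

lemma attachLeaves_connected (hc : Tg.Connected) : (attachLeaves Tg τ).Connected := by
  have hne : Nonempty (T ⊕ A) := ⟨.inl hc.nonempty.some⟩
  haveI := hne
  refine ⟨fun x y => ?_⟩
  have key : ∀ z : T ⊕ A, ∃ t : T, (attachLeaves Tg τ).Reachable z (.inl t) := by
    intro z
    cases z with
    | inl t => exact ⟨t, Reachable.refl _⟩
    | inr a => exact ⟨τ a, Adj.reachable (by simp)⟩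
  obtain ⟨tx, hx⟩ := key x
  obtain ⟨ty, hy⟩ := key y
  exact hx.trans (((hc tx ty).map (inlHom Tg τ)).trans hy.symm)

lemma attachLeaves_pull : ∀ {s t : T ⊕ A} (w : (attachLeaves Tg τ).Walk s t),
    (∀ z ∈ w.support, z.isLeft) →
    ∃ (x y : T) (hx : s = .inl x) (hy : t = .inl y) (w' : Tg.Walk x y),
      w.copy hx hy = w'.map (inlHom Tg τ) := by
  intro s t w
  induction w with
  | @nil u =>
    intro hall
    have := hall u (Walk.start_mem_support _)
    obtain ⟨x, rfl⟩ := Sum.isLeft_iff.mp this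
    exact ⟨x, x, rfl, rfl, Walk.nil, rfl⟩
  | @cons u m t' h w ih =>
    intro hall
    obtain ⟨x, rfl⟩ := Sum.isLeft_iff.mp (hall u (Walk.start_mem_support _))
    obtain ⟨y, z, hy, hz, w', hw'⟩ := ih (fun q hq => hall q (by
      rw [Walk.support_cons]; exact List.mem_cons_of_mem _ hq))
    subst hy; subst hz
    rw [Walk.copy_rfl_rfl] at hw'
    refine ⟨x, z, rfl, rfl, Walk.cons (by exact h) w', ?_⟩
    rw [Walk.copy_rfl_rfl, hw']; rfl

lemma attachLeaves_no_cycle_at_inr (a : A) (c : (attachLeaves Tg τ).Walk (.inr a) (.inr a)) :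
    ¬ c.IsCycle := by
  intro hc
  cases c with
  | nil => exact hc.ne_nil rfl
  | cons h q =>
    rename_i m
    obtain ⟨b, rfl⟩ : ∃ b : T, m = .inl b := by
      cases m with
      | inl b => exact ⟨b, rfl⟩
      | inr b => exact absurd h (attachLeaves_adj_inr_inr)
    have hb : b = τ a := h
    have hne : (Sum.inr a : T ⊕ A) ≠ .inl b := by simp
    obtain ⟨m2, h2, q2, hq2⟩ := Walk.exists_eq_cons_of_ne hne q.reverse
    obtain ⟨b2, rfl⟩ : ∃ b2 : T, m2 = .inl b2 := by
      cases m2 with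
      | inl b2 => exact ⟨b2, rfl⟩
      | inr b2 => exact absurd h2 (attachLeaves_adj_inr_inr)
    have hb2 : b2 = τ a := h2
    have hmem : s(Sum.inr a, Sum.inl b2) ∈ q.reverse.edges := by
      rw [hq2, Walk.edges_cons]; exact List.mem_cons_self
    rw [Walk.edges_reverse, List.mem_reverse] at hmem
    have heq : (s(Sum.inr a, Sum.inl b2) : Sym2 (T ⊕ A)) = s(Sum.inr a, Sum.inl b) := by
      rw [hb, hb2]
    rw [heq] at hmem
    have hnodup := hc.edges_nodup
    rw [Walk.edges_cons] at hnodup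
    exact (List.nodup_cons.mp hnodup).1 hmem

lemma attachLeaves_acyclic (hac : Tg.IsAcyclic) : (attachLeaves Tg τ).IsAcyclic := by
  classical
  intro v c hc
  rcases Classical.em (∃ a : A, (Sum.inr a : T ⊕ A) ∈ c.support) with hin | hin
  · obtain ⟨a, ha⟩ := hin
    exact attachLeaves_no_cycle_at_inr a (c.rotate _ ha) (hc.rotate ha)
  · push_neg at hin
    have hall : ∀ z ∈ c.support, z.isLeft := by
      intro z hz
      cases z with
      | inl t => rfl
      | inr a => exact absurd hz (hin a)
    obtain ⟨x, y, hx, hy, w', hw'⟩ := attachLeaves_pull c hall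
    have hxy : x = y := by rw [hx] at hy; exact Sum.inl.inj hy
    subst hxy
    subst hx
    rw [Walk.copy_rfl_rfl] at hw'
    have : (w'.map (inlHom Tg τ)).IsCycle := hw' ▸ hc
    have hinj : Function.Injective (inlHom Tg τ) := fun a b h => Sum.inl.inj h
    exact hac _ ((Walk.map_isCycle_iff_of_injective hinj).mp this)

end AttachLeaves


/-- Adding new vertices whose neighborhoods are cliques of `H` (and only edges
incident with new vertices) increases the layered tree-width by at most 1. -/
theorem stmt12 {U : Type} (p : ℕ) (hp : 0 < p) (G : SimpleGraph U) (O : Set U)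
    (hold : LayeredTreewidthLE O (G.induce O) p)
    (hnew : ∀ a, a ∉ O → ∀ u, G.Adj a u → u ∈ O)
    (hclique : ∀ a, a ∉ O → G.IsClique (G.neighborSet a)) :
    LayeredTreewidthLE U G (p + 1) := by
  classical
  obtain ⟨T, Tg, bag, L, ⟨hTc, hTa, hcov, hedge, hpre⟩, hlay, hbound⟩ := hold
  set Ka : U → Set ↑O := fun a => {w : ↑O | G.Adj a ↑w} with hKadef
  have hpairKa : ∀ a, a ∉ O → ∀ u ∈ Ka a, ∀ v ∈ Ka a, ∃ t, u ∈ bag t ∧ v ∈ bag t := by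
    intro a ha u hu v hv
    by_cases huv : u = v
    · subst huv
      obtain ⟨t, ht⟩ := hcov u
      exact ⟨t, ht, ht⟩
    · have hadj : G.Adj ↑u ↑v :=
        hclique a ha hu hv (fun h => huv (Subtype.ext h))
      exact hedge u v hadj
  have hlayKa : ∀ a, a ∉ O → ∀ u ∈ Ka a, ∀ v ∈ Ka a, L u ≤ L v + 1 := by
    intro a ha u hu v hv
    by_cases huv : u = v
    · subst huv; omega
    · have hadj : G.Adj ↑u ↑v :=
        hclique a ha hu hv (fun h => huv (Subtype.ext h))
      exact (hlay u v hadj).1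
  have hKafin : ∀ a, a ∉ O → (Ka a).Finite := by
    intro a ha
    by_contra hinf
    have hinf' : (Ka a).Infinite := hinf
    obtain ⟨K0, hK0sub, hK0card⟩ := hinf'.exists_subset_card_eq (3 * p + 1)
    obtain ⟨t0, ht0⟩ := helly hTc hTa bag hpre K0
      (fun u hu v hv => hpairKa a ha u (hK0sub hu) v (hK0sub hv))
    have hK0ne : K0.Nonempty := Finset.card_pos.mp (by omega)
    obtain ⟨u0, hu0⟩ := hK0ne
    set m := L u0 with hm
    have hsub3 : (↑K0 : Set ↑O) ⊆
        (bag t0 ∩ L ⁻¹' {m - 1}) ∪ (bag t0 ∩ L ⁻¹' {m}) ∪ (bag t0 ∩ L ⁻¹' {m + 1}) := by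
      intro u hu
      have hub : u ∈ bag t0 := ht0 u hu
      have h1 : L u ≤ m + 1 := hlayKa a ha u (hK0sub hu) u0 (hK0sub hu0)
      have h2 : m ≤ L u + 1 := hlayKa a ha u0 (hK0sub hu0) u (hK0sub hu)
      have : L u = m - 1 ∨ L u = m ∨ L u = m + 1 := by omega
      rcases this with h | h | h
      · exact Or.inl (Or.inl ⟨hub, h⟩)
      · exact Or.inl (Or.inr ⟨hub, h⟩)
      · exact Or.inr ⟨hub, h⟩
    have hle : (↑K0 : Set ↑O).encard ≤ 3 * p := by
      calc (↑K0 : Set ↑O).encard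
          ≤ ((bag t0 ∩ L ⁻¹' {m - 1}) ∪ (bag t0 ∩ L ⁻¹' {m}) ∪ (bag t0 ∩ L ⁻¹' {m + 1})).encard :=
            Set.encard_mono hsub3
        _ ≤ ((bag t0 ∩ L ⁻¹' {m - 1}) ∪ (bag t0 ∩ L ⁻¹' {m})).encard
              + (bag t0 ∩ L ⁻¹' {m + 1}).encard := Set.encard_union_le _ _
        _ ≤ (bag t0 ∩ L ⁻¹' {m - 1}).encard + (bag t0 ∩ L ⁻¹' {m}).encard
              + (bag t0 ∩ L ⁻¹' {m + 1}).encard := by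
            exact add_le_add_left (Set.encard_union_le _ _) _
        _ ≤ (p : ℕ∞) + p + p := by
            exact add_le_add (add_le_add (hbound t0 _) (hbound t0 _)) (hbound t0 _)
        _ = ((3 * p : ℕ) : ℕ∞) := by push_cast; ring
    rw [Set.encard_coe_eq_coe_finsetCard, hK0card] at hle
    have : (3 * p + 1 : ℕ) ≤ 3 * p := by exact_mod_cast hle
    omega
  have hbag_all : ∀ a : {a : U // a ∉ O}, ∃ t, ∀ w ∈ Ka a.val, w ∈ bag t := by
    intro a
    have hfin := hKafin a.val a.2
    obtain ⟨t, ht⟩ := helly hTc hTa bag hpre hfin.toFinset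
      (fun u hu v hv => hpairKa a.val a.2 u (hfin.mem_toFinset.mp hu) v (hfin.mem_toFinset.mp hv))
    exact ⟨t, fun w hw => ht w (hfin.mem_toFinset.mpr hw)⟩
  choose τ hτ using hbag_all
  set Ts := attachLeaves Tg τ with hTs
  set bag' : T ⊕ {a : U // a ∉ O} → Set U := Sum.elim (fun t => Subtype.val '' bag t)
    (fun a => G.neighborSet a.val ∪ {a.val}) with hbag'
  set L' : U → ℕ := fun u => if h : u ∈ O then L ⟨u, h⟩ else sInf (L '' Ka u) with hL'
  have hL'O : ∀ (u : U) (hu : u ∈ O), L' u = L ⟨u, hu⟩ := fun u hu => dif_pos hu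
  refine ⟨T ⊕ {a : U // a ∉ O}, Ts, bag', L',
    ⟨attachLeaves_connected hTc, attachLeaves_acyclic hTa, ?_, ?_, ?_⟩, ?_, ?_⟩
  · -- cover
    intro v
    by_cases hv : v ∈ O
    · obtain ⟨t, ht⟩ := hcov ⟨v, hv⟩
      exact ⟨.inl t, ⟨⟨v, hv⟩, ht, rfl⟩⟩
    · exact ⟨.inr ⟨v, hv⟩, Or.inr rfl⟩
  · -- edge cover
    intro u v huv
    by_cases hu : u ∈ O <;> by_cases hv : v ∈ O
    · obtain ⟨t, h1, h2⟩ := hedge ⟨u, hu⟩ ⟨v, hv⟩ huv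
      exact ⟨.inl t, ⟨⟨u, hu⟩, h1, rfl⟩, ⟨⟨v, hv⟩, h2, rfl⟩⟩
    · exact ⟨.inr ⟨v, hv⟩, Or.inl huv.symm, Or.inr rfl⟩
    · exact ⟨.inr ⟨u, hu⟩, Or.inr rfl, Or.inl huv⟩
    · exact absurd (hnew u hu v huv) hv
  · -- supports preconnected
    intro v
    by_cases hv : v ∈ O
    · have hmemL : ∀ t : T, v ∈ bag' (.inl t) ↔ (⟨v, hv⟩ : ↑O) ∈ bag t := by
        intro t
        constructor
        · rintro ⟨w, hw, hwv⟩
          have : w = ⟨v, hv⟩ := Subtype.ext hwv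
          exact this ▸ hw
        · intro h; exact ⟨⟨v, hv⟩, h, rfl⟩
      have hmemR : ∀ a : {a : U // a ∉ O}, v ∈ bag' (.inr a) ↔ G.Adj a.val v := by
        intro a
        constructor
        · rintro (h | h)
          · exact h
          · exact absurd (h ▸ hv : a.val ∈ O) a.2
        · intro h; exact Or.inl h
      intro x y
      let f : (Tg.induce {t | (⟨v, hv⟩ : ↑O) ∈ bag t}) →g (Ts.induce {z | v ∈ bag' z}) :=
        { toFun := fun t => ⟨.inl t.val, (hmemL t.val).mpr t.2⟩,
          map_rel' := fun h => h }
      have key : ∀ z : ↑{z | v ∈ bag' z}, ∃ (t : T) (ht : (⟨v, hv⟩ : ↑O) ∈ bag t),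
          (Ts.induce {z | v ∈ bag' z}).Reachable z ⟨.inl t, (hmemL t).mpr ht⟩ := by
        rintro ⟨zv, hz⟩
        cases zv with
        | inl t => exact ⟨t, (hmemL t).mp hz, Reachable.refl _⟩
        | inr a =>
          have hadjav : G.Adj a.val v := (hmemR a).mp hz
          have hvbag : (⟨v, hv⟩ : ↑O) ∈ bag (τ a) := hτ a ⟨v, hv⟩ hadjav
          refine ⟨τ a, hvbag, Adj.reachable ?_⟩
          show Ts.Adj (.inr a) (.inl (τ a))
          simp [hTs]
      obtain ⟨tx, htx, hx⟩ := key x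
      obtain ⟨ty, hty, hy⟩ := key y
      have hmid := (hpre ⟨v, hv⟩ ⟨tx, htx⟩ ⟨ty, hty⟩).map f
      exact hx.trans (hmid.trans hy.symm)
    · intro x y
      have hsingle : ∀ z : T ⊕ {a : U // a ∉ O}, v ∈ bag' z → z = .inr ⟨v, hv⟩ := by
        intro z hz
        cases z with
        | inl t =>
          obtain ⟨w, hw, hwv⟩ := hz
          exact absurd (hwv ▸ w.2) hv
        | inr a =>
          rcases hz with h | h
          · exact absurd (hnew a.val a.2 v h) hv
          · exact congrArg Sum.inr (Subtype.ext h.symm)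
      have hxy : x = y := Subtype.ext (by rw [hsingle x.val x.2, hsingle y.val y.2])
      rw [hxy]
  · -- layering
    intro u v huv
    by_cases hu : u ∈ O <;> by_cases hv : v ∈ O
    · have := hlay ⟨u, hu⟩ ⟨v, hv⟩ huv
      rw [hL'O u hu, hL'O v hv]
      exact this
    · have h1 : L' u = L ⟨u, hu⟩ := hL'O u hu
      have h2 : L' v = sInf (L '' Ka v) := dif_neg hv
      have humem : (⟨u, hu⟩ : ↑O) ∈ Ka v := huv.symm
      have hne : (L '' Ka v).Nonempty := ⟨_, ⟨⟨u, hu⟩, humem, rfl⟩⟩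
      have hle : sInf (L '' Ka v) ≤ L ⟨u, hu⟩ := Nat.sInf_le ⟨⟨u, hu⟩, humem, rfl⟩
      obtain ⟨w, hw, hwL⟩ := Nat.sInf_mem hne
      have hlw : L ⟨u, hu⟩ ≤ L w + 1 := hlayKa v hv ⟨u, hu⟩ humem w hw
      constructor
      · rw [h1, h2]; omega
      · rw [h1, h2]; omega
    · have h1 : L' v = L ⟨v, hv⟩ := hL'O v hv
      have h2 : L' u = sInf (L '' Ka u) := dif_neg hu
      have hvmem : (⟨v, hv⟩ : ↑O) ∈ Ka u := huv
      have hne : (L '' Ka u).Nonempty := ⟨_, ⟨⟨v, hv⟩, hvmem, rfl⟩⟩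
      have hle : sInf (L '' Ka u) ≤ L ⟨v, hv⟩ := Nat.sInf_le ⟨⟨v, hv⟩, hvmem, rfl⟩
      obtain ⟨w, hw, hwL⟩ := Nat.sInf_mem hne
      have hlw : L ⟨v, hv⟩ ≤ L w + 1 := hlayKa u hu ⟨v, hv⟩ hvmem w hw
      constructor
      · rw [h1, h2]; omega
      · rw [h1, h2]; omega
    · exact absurd (hnew u hu v huv) hv
  · -- width bound
    intro t i
    cases t with
    | inl t =>
      have heq : bag' (.inl t) ∩ L' ⁻¹' {i} = Subtype.val '' (bag t ∩ L ⁻¹' {i}) := by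
        ext u
        constructor
        · rintro ⟨⟨w, hw, rfl⟩, hL⟩
          refine ⟨w, ⟨hw, ?_⟩, rfl⟩
          have : L' w.val = L w := by
            rw [hL'O w.val w.2]
          simp only [Set.mem_preimage, Set.mem_singleton_iff] at hL ⊢
          rw [← this]; exact hL
        · rintro ⟨w, ⟨hw, hLw⟩, rfl⟩
          refine ⟨⟨w, hw, rfl⟩, ?_⟩
          simp only [Set.mem_preimage, Set.mem_singleton_iff] at hLw ⊢
          rw [hL'O w.val w.2]
          exact hLw
      rw [heq, Subtype.coe_injective.encard_image _]
      calc (bag t ∩ L ⁻¹' {i}).encard ≤ (p : ℕ∞) := hbound t i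
        _ ≤ (p : ℕ∞) + 1 := le_self_add
        _ = ((p + 1 : ℕ) : ℕ∞) := by push_cast; ring
    | inr a =>
      have hsub : bag' (.inr a) ∩ L' ⁻¹' {i} ⊆
          insert a.val (Subtype.val '' (bag (τ a) ∩ L ⁻¹' {i})) := by
        rintro u ⟨hu, hL⟩
        rcases hu with h | h
        · right
          have huO : u ∈ O := hnew a.val a.2 u h
          refine ⟨⟨u, huO⟩, ⟨hτ a ⟨u, huO⟩ h, ?_⟩, rfl⟩
          simp only [Set.mem_preimage, Set.mem_singleton_iff] at hL ⊢
          rw [← hL'O u huO]; exact hL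
        · left; exact h
      calc (bag' (.inr a) ∩ L' ⁻¹' {i}).encard
          ≤ (insert a.val (Subtype.val '' (bag (τ a) ∩ L ⁻¹' {i}))).encard :=
            Set.encard_mono hsub
        _ ≤ (Subtype.val '' (bag (τ a) ∩ L ⁻¹' {i})).encard + 1 := Set.encard_insert_le _ _
        _ ≤ (p : ℕ∞) + 1 := by
            rw [Subtype.coe_injective.encard_image _]
            exact add_le_add_left (hbound (τ a) i) 1
        _ = ((p + 1 : ℕ) : ℕ∞) := by push_cast; ring
end

section
/- Let p be a positive integer, and let F_x denote the class of graphs of layered tree-width at most x. If G can be obtained from a graph G' ∈ F_p^{+p} by adding new vertices and new edges incident with new vertices such that each new vertex's neighborhood is contained in a clique of G', then G ∈ F_{p+1}^{+p}. -/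
open SimpleGraph

namespace Stmt13Aux

variable {T : Type} {Tg : SimpleGraph T}

/-- Walk-connectedness of a vertex subset. -/
def Conn (Tg : SimpleGraph T) (S : Set T) : Prop :=
  ∀ x ∈ S, ∀ y ∈ S, ∃ w : Tg.Walk x y, ∀ z ∈ w.support, z ∈ S

lemma convex_support (ha : Tg.IsAcyclic) {S : Set T} (hS : Conn Tg S) {x y : T}
    (hx : x ∈ S) (hy : y ∈ S) {p : Tg.Walk x y} (hp : p.IsPath) :
    ∀ z ∈ p.support, z ∈ S := by
  classical
  obtain ⟨w, hw⟩ := hS x hx y hy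
  have h1 : (⟨p, hp⟩ : Tg.Path x y) = ⟨w.bypass, w.bypass_isPath⟩ := ha.path_unique _ _
  have hps : p = w.bypass := congrArg Subtype.val h1
  intro z hz
  rw [hps] at hz
  exact hw z (w.support_bypass_subset hz)

lemma gate (hc : Tg.Connected) (ha : Tg.IsAcyclic) {S : Set T} (hS : Conn Tg S)
    (hne : S.Nonempty) (t : T) :
    ∃ s ∈ S, ∀ x ∈ S, ∀ p : Tg.Walk t x, p.IsPath → s ∈ p.support := by
  classical
  obtain ⟨x₀, hx₀⟩ := hne
  have hex : ∃ n, ∃ x ∈ S, ∃ w : Tg.Walk t x, w.length = n :=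
    ⟨_, x₀, hx₀, (hc.preconnected t x₀).some, rfl⟩
  obtain ⟨s, hs, w, hw⟩ := Nat.find_spec hex
  set Q := w.bypass with hQdef
  have hQpath : Q.IsPath := w.bypass_isPath
  have hQmin : Nat.find hex ≤ Q.length := Nat.find_min' hex ⟨s, hs, Q, rfl⟩
  have hQS : ∀ z ∈ Q.support, z ∈ S → z = s := by
    intro z hz hzS
    by_contra hne'
    have hsplit := congrArg Walk.length (Q.take_spec hz)
    rw [Walk.length_append] at hsplit
    have hdrop : 1 ≤ (Q.dropUntil z hz).length := by
      rcases Nat.eq_zero_or_pos (Q.dropUntil z hz).length with h0 | h1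
      · exact absurd (Walk.eq_of_length_eq_zero h0) hne'
      · exact h1
    have hlt : (Q.takeUntil z hz).length < Q.length := by omega
    have : Nat.find hex ≤ (Q.takeUntil z hz).length :=
      Nat.find_min' hex ⟨z, hzS, Q.takeUntil z hz, rfl⟩
    have hQn : Q.length ≤ Nat.find hex := hw ▸ w.length_bypass_le
    omega
  refine ⟨s, hs, ?_⟩
  intro x hx p hp
  obtain ⟨w', hw'⟩ := hS s hs x hx
  set R := w'.bypass with hRdef
  have hRS : ∀ z ∈ R.support, z ∈ S := fun z hz => hw' z (w'.support_bypass_subset hz)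
  have hRpath : R.IsPath := w'.bypass_isPath
  have hWpath : (Q.append R).IsPath := by
    rw [Walk.isPath_def, Walk.support_append]
    refine List.Nodup.append hQpath.support_nodup hRpath.support_nodup.tail ?_
    intro z hz hz'
    have hzS : z ∈ S := hRS z (List.mem_of_mem_tail hz')
    have hzs : z = s := hQS z hz hzS
    subst hzs
    have := hRpath.support_nodup
    rw [R.support_eq_cons] at this
    exact (List.nodup_cons.mp this).1 hz'
  have hpeq : p = Q.append R := by
    have := ha.path_unique (⟨p, hp⟩ : Tg.Path t x) ⟨Q.append R, hWpath⟩
    exact congrArg Subtype.val this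
  rw [hpeq, Walk.mem_support_append_iff]
  exact Or.inl Q.end_mem_support

lemma helly (hc : Tg.Connected) (ha : Tg.IsAcyclic) {ι : Type} (F : ι → Set T)
    (hconn : ∀ i, Conn Tg (F i)) (K : Finset ι)
    (hpair : ∀ i ∈ K, ∀ j ∈ K, (F i ∩ F j).Nonempty) :
    ∃ t, ∀ i ∈ K, t ∈ F i := by
  classical
  induction K using Finset.induction with
  | empty => exact ⟨hc.nonempty.some, by simp⟩
  | @insert j K hjK ih =>
    obtain ⟨t, ht⟩ := ih fun i hi j' hj' =>
      hpair _ (Finset.mem_insert_of_mem hi) _ (Finset.mem_insert_of_mem hj')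
    have hFj : (F j).Nonempty := by
      obtain ⟨x, hx, -⟩ := hpair j (Finset.mem_insert_self _ _) j (Finset.mem_insert_self _ _)
      exact ⟨x, hx⟩
    obtain ⟨s, hsj, hgate⟩ := gate hc ha (hconn j) hFj t
    refine ⟨s, ?_⟩
    intro i hi
    rcases Finset.mem_insert.mp hi with rfl | hiK
    · exact hsj
    · obtain ⟨x, hxi, hxj⟩ := hpair i (Finset.mem_insert_of_mem hiK) j (Finset.mem_insert_self _ _)
      obtain ⟨w⟩ := hc.preconnected t x
      have hp := w.bypass_isPath
      have hsmem : s ∈ w.bypass.support := hgate x hxj w.bypass hp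
      exact convex_support ha (hconn i) (ht i hiK) hxi hp s hsmem

/-- Coercion homomorphism from an induced subgraph. -/
def valHom (Tg : SimpleGraph T) (S : Set T) : (Tg.induce S) →g Tg :=
  ⟨Subtype.val, fun {a b} h => h⟩

lemma conn_of_preconnected {S : Set T} (h : (Tg.induce S).Preconnected) : Conn Tg S := by
  classical
  intro x hx y hy
  obtain ⟨w⟩ := h ⟨x, hx⟩ ⟨y, hy⟩
  refine ⟨w.map (valHom Tg S), ?_⟩
  intro z hz
  replace hz : z ∈ (w.map (valHom Tg S)).support := hz
  rw [Walk.support_map] at hz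
  obtain ⟨⟨z', hz'⟩, -, rfl⟩ := List.mem_map.mp hz
  exact hz'

lemma clique_in_bag {V : Type} {G : SimpleGraph V} {Tg : SimpleGraph T} {bag : T → Set V}
    (htd : IsTreeDecomp G Tg bag) (K : Finset V)
    (hK : ∀ u ∈ K, ∀ v ∈ K, u ≠ v → G.Adj u v) :
    ∃ t, ∀ u ∈ K, u ∈ bag t := by
  obtain ⟨hc, ha, hvert, hedge, hsub⟩ := htd
  apply helly hc ha (fun v => {t | v ∈ bag t}) (fun v => conn_of_preconnected (hsub v)) K
  intro i hi j hj
  by_cases hij : i = j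
  · subst hij
    obtain ⟨t, ht⟩ := hvert i
    exact ⟨t, ht, ht⟩
  · obtain ⟨t, h1, h2⟩ := hedge i j (hK i hi j hj hij)
    exact ⟨t, h1, h2⟩



variable {T A : Type}

/-- Attach pendant leaves `A` to the graph `Tg` via attachment map `att`. -/
def pendant (Tg : SimpleGraph T) (att : A → T) : SimpleGraph (T ⊕ A) where
  Adj x y := match x, y with
    | Sum.inl s, Sum.inl t => Tg.Adj s t
    | Sum.inl t, Sum.inr a => att a = t
    | Sum.inr a, Sum.inl t => att a = t
    | Sum.inr _, Sum.inr _ => False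
  symm := by constructor; rintro (s | a) (t | b) h
             · exact h.symm
             · exact h
             · exact h
             · exact h.elim
  loopless := by constructor; rintro (t | a) h
                 · exact Tg.loopless.irrefl t h
                 · exact h

variable {Tg : SimpleGraph T} {att : A → T}

@[simp] lemma pendant_adj_inl_inl {s t : T} :
    (pendant Tg att).Adj (Sum.inl s) (Sum.inl t) ↔ Tg.Adj s t := Iff.rfl

@[simp] lemma pendant_adj_inr_inl {a : A} {t : T} :
    (pendant Tg att).Adj (Sum.inr a) (Sum.inl t) ↔ att a = t := Iff.rfl

@[simp] lemma pendant_adj_inl_inr {a : A} {t : T} :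
    (pendant Tg att).Adj (Sum.inl t) (Sum.inr a) ↔ att a = t := Iff.rfl

@[simp] lemma pendant_adj_inr_inr {a b : A} :
    ¬ (pendant Tg att).Adj (Sum.inr a) (Sum.inr b) := fun h => h

/-- The inclusion homomorphism. -/
def pendantHom (Tg : SimpleGraph T) (att : A → T) : Tg →g pendant Tg att :=
  ⟨Sum.inl, fun {a b} h => h⟩

lemma pendant_connected (hc : Tg.Connected) : (pendant Tg att).Connected := by
  have hre : ∀ s t : T, (pendant Tg att).Reachable (Sum.inl s) (Sum.inl t) := fun s t =>
    (hc.preconnected s t).map (pendantHom Tg att)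
  have hra : ∀ a : A, (pendant Tg att).Reachable (Sum.inr a) (Sum.inl (att a)) := fun a =>
    (Adj.reachable (by simp))
  haveI : Nonempty (T ⊕ A) := ⟨Sum.inl hc.nonempty.some⟩
  apply Connected.mk
  rintro (s | a) (t | b)
  · exact hre s t
  · exact (hre s (att b)).trans (hra b).symm
  · exact (hra a).trans (hre (att a) t)
  · exact ((hra a).trans (hre (att a) (att b))).trans (hra b).symm

lemma no_cycle_at_inr (a : A) (c : (pendant Tg att).Walk (Sum.inr a) (Sum.inr a)) :
    ¬ c.IsCycle := by
  intro hc
  cases c with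
  | nil => exact hc.isCircuit.ne_nil rfl
  | cons h q =>
    rename_i x
    have hx : x = Sum.inl (att a) := by
      cases x with
      | inl t => exact congrArg Sum.inl ((pendant_adj_inr_inl).mp h).symm
      | inr b => exact absurd h (pendant_adj_inr_inr)
    subst hx
    obtain ⟨y, h2, r, hqr⟩ := Walk.exists_eq_cons_of_ne (by simp) q.reverse
    have hy : y = Sum.inl (att a) := by
      cases y with
      | inl t => exact congrArg Sum.inl ((pendant_adj_inr_inl).mp h2).symm
      | inr b => exact absurd h2 (pendant_adj_inr_inr)
    subst hy
    have hmem' : s(Sum.inr a, Sum.inl (att a)) ∈ q.reverse.edges := by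
      rw [hqr]; simp
    have hmem : s(Sum.inr a, Sum.inl (att a)) ∈ q.edges := by
      rwa [Walk.edges_reverse, List.mem_reverse] at hmem'
    have hnodup := hc.isCircuit.isTrail.edges_nodup
    rw [Walk.edges_cons] at hnodup
    exact (List.nodup_cons.mp hnodup).1 hmem

lemma proj_walk {x y : T ⊕ A} (w : (pendant Tg att).Walk x y)
    (hsup : ∀ z ∈ w.support, ∃ t, z = Sum.inl t) :
    ∃ (s t : T) (w' : Tg.Walk s t), x = Sum.inl s ∧ y = Sum.inl t ∧
      w.support = w'.support.map Sum.inl ∧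
      w.edges = w'.edges.map (Sym2.map Sum.inl) ∧ w.length = w'.length := by
  induction w with
  | nil =>
    rename_i u
    obtain ⟨t, rfl⟩ := hsup u (by simp)
    exact ⟨t, t, Walk.nil, rfl, rfl, by simp, by simp, rfl⟩
  | cons h q ih =>
    rename_i u m _
    have hsq : ∀ z ∈ q.support, ∃ t, z = Sum.inl t := fun z hz =>
      hsup z (by rw [Walk.support_cons]; exact List.mem_cons_of_mem _ hz)
    obtain ⟨s', t, w', rfl, rfl, hsupp, hedges, hlen⟩ := ih hsq
    obtain ⟨s, rfl⟩ := hsup u (Walk.start_mem_support _)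
    have hadj : Tg.Adj s s' := h
    refine ⟨s, t, Walk.cons hadj w', rfl, rfl, ?_, ?_, ?_⟩
    · rw [Walk.support_cons, Walk.support_cons, hsupp, List.map_cons]
    · rw [Walk.edges_cons, Walk.edges_cons, hedges, List.map_cons, Sym2.map_pair_eq]
    · simp [hlen]

lemma pendant_acyclic (ha : Tg.IsAcyclic) : (pendant Tg att).IsAcyclic := by
  classical
  intro v c hcyc
  rcases Classical.em (∃ a, Sum.inr a ∈ c.support) with hR | hR
  · obtain ⟨a, haS⟩ := hR
    exact no_cycle_at_inr a (c.rotate (Sum.inr a) haS) (hcyc.rotate haS)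
  · push_neg at hR
    have hsup : ∀ z ∈ c.support, ∃ t, z = Sum.inl t := by
      intro z hz
      cases z with
      | inl t => exact ⟨t, rfl⟩
      | inr a => exact absurd hz (hR a)
    obtain ⟨s, t, w', hxs, hyt, hsupp, hedges, hlen⟩ := proj_walk c hsup
    have hst : s = t := by
      rw [hxs] at hyt
      exact Sum.inl_injective hyt
    subst hst
    apply ha w'
    refine ⟨⟨⟨?_⟩, ?_⟩, ?_⟩
    · exact List.Nodup.of_map _ (hedges ▸ hcyc.isCircuit.isTrail.edges_nodup)
    · intro hnil
      apply hcyc.isCircuit.ne_nil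
      subst hnil
      have : c.length = 0 := by simpa using hlen
      cases c with
      | nil => rfl
      | cons h q => simp at this
    · have h1 := hcyc.support_nodup
      rw [hsupp, ← List.map_tail] at h1
      exact List.Nodup.of_map _ h1

end Stmt13Aux

/-- If `G` is obtained from a graph `G' ∈ F_p^{+p}` (layered tree-width at most
`p` after deleting at most `p` vertices) by adding new vertices whose
neighborhoods are contained in cliques of `G'`, then `G ∈ F_{p+1}^{+p}`. -/
theorem stmt13 {U : Type} (p : ℕ) (hp : 0 < p) (G : SimpleGraph U) (O : Set U)
    (hold : ∃ Z ⊆ O, Z.encard ≤ (p : ℕ∞) ∧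
      LayeredTreewidthLE (O \ Z : Set U) (G.induce (O \ Z)) p)
    (hnew : ∀ a, a ∉ O → ∀ u, G.Adj a u → u ∈ O)
    (hclique : ∀ a, a ∉ O → G.IsClique (G.neighborSet a)) :
    ∃ Z' : Set U, Z'.encard ≤ (p : ℕ∞) ∧
      LayeredTreewidthLE (Z'ᶜ : Set U) (G.induce Z'ᶜ) (p + 1) := by
  classical
  obtain ⟨Z, hZO, hZcard, T, Tg, bag, L, htd, hlay, hbound⟩ := hold
  refine ⟨Z, hZcard, ?_⟩
  obtain ⟨hc, hacyc, hvert, hedge, hsub⟩ := id htd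
  -- the inclusion of old vertices into the new vertex set
  let ι : (O \ Z : Set U) → (Zᶜ : Set U) := fun u => ⟨u.1, fun hz => u.2.2 hz⟩
  have hinj : Function.Injective ι := by
    intro u v h
    apply Subtype.ext
    exact congrArg (fun x : (Zᶜ : Set U) => (x : U)) h
  -- the new vertices
  let A := {a : (Zᶜ : Set U) // (a : U) ∉ O}
  let K : A → Set (O \ Z : Set U) := fun a => {u | G.Adj (a.1 : U) (u : U)}
  -- K a is a clique in the old graph
  have hKadj : ∀ a : A, ∀ u ∈ K a, ∀ v ∈ K a, u ≠ v →
      (G.induce (O \ Z : Set U)).Adj u v := by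
    intro a u hu v hv hne
    exact hclique a.1.1 a.2 hu hv (fun h => hne (Subtype.ext h))
  have hspread : ∀ a : A, ∀ u ∈ K a, ∀ v ∈ K a, L u ≤ L v + 1 ∧ L v ≤ L u + 1 := by
    intro a u hu v hv
    by_cases huv : u = v
    · subst huv; omega
    · exact hlay u v (hKadj a u hu v hv huv)
  -- K a is finite
  have hKfin : ∀ a : A, (K a).Finite := by
    intro a
    by_contra hinf
    obtain ⟨s, hsub', hsfin, hscard⟩ := Set.Infinite.exists_subset_ncard_eq hinf (3 * p + 1)
    obtain ⟨t₀, ht₀⟩ := Stmt13Aux.clique_in_bag htd hsfin.toFinset (by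
      intro u hu v hv hne
      exact hKadj a u (hsub' (hsfin.mem_toFinset.mp hu)) v (hsub' (hsfin.mem_toFinset.mp hv)) hne)
    have hsne : s.Nonempty := Set.nonempty_of_ncard_ne_zero (by omega)
    obtain ⟨u0, hu0⟩ := hsne
    have hsub3 : s ⊆ (bag t₀ ∩ L ⁻¹' {L u0}) ∪ (bag t₀ ∩ L ⁻¹' {L u0 + 1}) ∪
        (bag t₀ ∩ L ⁻¹' {L u0 - 1}) := by
      intro u hu
      have hb : u ∈ bag t₀ := ht₀ u (hsfin.mem_toFinset.mpr hu)
      have hsp := hspread a u (hsub' hu) u0 (hsub' hu0)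
      have h3 : L u = L u0 ∨ L u = L u0 + 1 ∨ L u = L u0 - 1 := by omega
      rcases h3 with h | h | h
      · exact Or.inl (Or.inl ⟨hb, h⟩)
      · exact Or.inl (Or.inr ⟨hb, h⟩)
      · exact Or.inr ⟨hb, h⟩
    have hcard : s.encard ≤ (p : ℕ∞) + p + p := by
      refine le_trans (Set.encard_mono hsub3) ?_
      refine le_trans (Set.encard_union_le _ _) ?_
      gcongr
      · refine le_trans (Set.encard_union_le _ _) ?_
        gcongr
        · exact hbound t₀ (L u0)
        · exact hbound t₀ (L u0 + 1)
      · exact hbound t₀ (L u0 - 1)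
    rw [Set.Finite.encard_eq_coe_toFinset_card hsfin] at hcard
    rw [Set.ncard_eq_toFinset_card s hsfin] at hscard
    rw [hscard] at hcard
    have : (3 * p + 1 : ℕ) ≤ p + p + p := by exact_mod_cast hcard
    omega
  -- attachment points: a bag containing all of K a
  have hattex : ∀ a : A, ∃ t, ∀ u ∈ K a, u ∈ bag t := by
    intro a
    obtain ⟨t, ht⟩ := Stmt13Aux.clique_in_bag htd (hKfin a).toFinset (by
      intro u hu v hv hne
      exact hKadj a u ((hKfin a).mem_toFinset.mp hu) v ((hKfin a).mem_toFinset.mp hv) hne)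
    exact ⟨t, fun u hu => ht u (((hKfin a).mem_toFinset).mpr hu)⟩
  choose att hatt using hattex
  -- the new tree and decomposition
  let Tg' := Stmt13Aux.pendant Tg att
  let bag' : T ⊕ A → Set (Zᶜ : Set U) :=
    Sum.elim (fun t => ι '' bag t) (fun a => ι '' K a ∪ {a.1})
  let L' : (Zᶜ : Set U) → ℕ := fun v =>
    if h : (v : U) ∈ O then L ⟨v.1, h, v.2⟩
    else (if h2 : (K ⟨v, h⟩).Nonempty then L h2.some else 0)
  have hLι : ∀ u : (O \ Z : Set U), L' (ι u) = L u := by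
    intro u
    show (if h : ((ι u : (Zᶜ : Set U)) : U) ∈ O then _ else _) = L u
    rw [dif_pos u.2.1]
  have hLnew : ∀ a : A, ∀ u ∈ K a, L' a.1 ≤ L u + 1 ∧ L u ≤ L' a.1 + 1 := by
    intro a u hu
    have h2 : (K a).Nonempty := ⟨u, hu⟩
    have : L' a.1 = L h2.some := by
      show (if h : ((a.1 : (Zᶜ : Set U)) : U) ∈ O then _ else _) = _
      rw [dif_neg a.2, dif_pos h2]
    rw [this]
    have hsp := hspread a h2.some h2.some_mem u hu
    omega
  refine ⟨T ⊕ A, Tg', bag', L', ⟨?_, ?_, ?_, ?_, ?_⟩, ?_, ?_⟩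
  · exact Stmt13Aux.pendant_connected hc
  · exact Stmt13Aux.pendant_acyclic hacyc
  · -- every vertex in some bag
    intro v
    by_cases hvO : (v : U) ∈ O
    · obtain ⟨t, ht⟩ := hvert ⟨v.1, hvO, v.2⟩
      refine ⟨Sum.inl t, ?_⟩
      exact ⟨⟨v.1, hvO, v.2⟩, ht, rfl⟩
    · exact ⟨Sum.inr ⟨v, hvO⟩, Or.inr rfl⟩
  · -- edges covered
    intro v w hadj
    have hadj' : G.Adj (v : U) (w : U) := hadj
    by_cases hvO : (v : U) ∈ O
    · by_cases hwO : (w : U) ∈ O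
      · obtain ⟨t, h1, h2⟩ := hedge ⟨v.1, hvO, v.2⟩ ⟨w.1, hwO, w.2⟩ hadj'
        exact ⟨Sum.inl t, ⟨_, h1, rfl⟩, ⟨_, h2, rfl⟩⟩
      · -- w is new
        have hvO2 : (v : U) ∈ O := hvO
        refine ⟨Sum.inr ⟨w, hwO⟩, ?_, Or.inr rfl⟩
        exact Or.inl ⟨⟨v.1, hvO, v.2⟩, hadj'.symm, rfl⟩
    · have hwO : (w : U) ∈ O := hnew v.1 hvO w.1 hadj'
      refine ⟨Sum.inr ⟨v, hvO⟩, Or.inr rfl, ?_⟩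
      exact Or.inl ⟨⟨w.1, hwO, w.2⟩, hadj', rfl⟩
  · -- subtrees connected
    intro v
    by_cases hvO : (v : U) ∈ O
    · set u : (O \ Z : Set U) := ⟨v.1, hvO, v.2⟩ with hu_def
      have hv : v = ι u := Subtype.ext rfl
      set Sv : Set (T ⊕ A) := {t' | v ∈ bag' t'} with hSv_def
      have hmem_inl : ∀ t : T, (Sum.inl t ∈ Sv ↔ u ∈ bag t) := by
        intro t
        constructor
        · rintro ⟨u', hu', hval⟩
          have : u' = u := hinj (by rw [hval, hv])
          rwa [← this]
        · intro h
          exact ⟨u, h, hv.symm⟩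
      have hmem_inr : ∀ a : A, Sum.inr a ∈ Sv → u ∈ K a := by
        intro a ha
        rcases ha with ⟨u', hu', hval⟩ | hval
        · have : u' = u := hinj (by rw [hval, hv])
          rwa [← this]
        · exact absurd (show (v : U) ∈ O from hvO) (by rw [show v = a.1 from hval]; exact a.2)
      have hatt_mem : ∀ a : A, u ∈ K a → Sum.inl (att a) ∈ Sv := by
        intro a ha
        exact (hmem_inl (att a)).mpr (hatt a u ha)
      -- the lifting homomorphism
      let f : (Tg.induce {t | u ∈ bag t}) →g (Tg'.induce Sv) :=
        ⟨fun tt => ⟨Sum.inl tt.1, (hmem_inl tt.1).mpr tt.2⟩, fun {a b} h => h⟩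
      have hreach_inl : ∀ (t1 t2 : T) (h1 : Sum.inl t1 ∈ Sv) (h2 : Sum.inl t2 ∈ Sv),
          (Tg'.induce Sv).Reachable ⟨Sum.inl t1, h1⟩ ⟨Sum.inl t2, h2⟩ := by
        intro t1 t2 h1 h2
        exact (hsub u ⟨t1, (hmem_inl t1).mp h1⟩ ⟨t2, (hmem_inl t2).mp h2⟩).map f
      have hstep : ∀ (a : A) (h : Sum.inr a ∈ Sv),
          (Tg'.induce Sv).Reachable ⟨Sum.inr a, h⟩
            ⟨Sum.inl (att a), hatt_mem a (hmem_inr a h)⟩ := by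
        intro a h
        exact Adj.reachable (show att a = att a from rfl)
      rintro ⟨(t1 | a1), h1⟩ ⟨(t2 | a2), h2⟩
      · exact hreach_inl t1 t2 h1 h2
      · exact (hreach_inl t1 (att a2) h1 _).trans (hstep a2 h2).symm
      · exact (hstep a1 h1).trans (hreach_inl (att a1) t2 _ h2)
      · exact ((hstep a1 h1).trans (hreach_inl (att a1) (att a2) _ _)).trans (hstep a2 h2).symm
    · set a : A := ⟨v, hvO⟩ with ha_def
      have hSv : {t' | v ∈ bag' t'} = {Sum.inr a} := by
        ext t'
        constructor
        · intro ht'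
          cases t' with
          | inl t =>
            obtain ⟨u', hu', hval⟩ := ht'
            exact absurd (show (v : U) ∈ O by rw [← hval]; exact u'.2.1) hvO
          | inr b =>
            rcases ht' with ⟨u', hu', hval⟩ | hval
            · exact absurd (show (v : U) ∈ O by rw [← hval]; exact u'.2.1) hvO
            · have : b = a := Subtype.ext hval.symm
              rw [this]; rfl
        · intro ht'
          rw [Set.mem_singleton_iff] at ht'
          rw [ht']
          exact Or.inr rfl
      intro x y
      have hx : (x : T ⊕ A) = Sum.inr a := (Set.ext_iff.mp hSv _).mp x.2
      have hy : (y : T ⊕ A) = Sum.inr a := (Set.ext_iff.mp hSv _).mp y.2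
      have hxy : x = y := Subtype.ext (by rw [hx, hy])
      subst hxy
      exact Reachable.refl x
  · -- layering
    intro v w hadj
    have hadj' : G.Adj (v : U) (w : U) := hadj
    by_cases hvO : (v : U) ∈ O
    · by_cases hwO : (w : U) ∈ O
      · have h1 := hlay ⟨v.1, hvO, v.2⟩ ⟨w.1, hwO, w.2⟩ hadj'
        have e1 : L' v = L ⟨v.1, hvO, v.2⟩ := hLι ⟨v.1, hvO, v.2⟩
        have e2 : L' w = L ⟨w.1, hwO, w.2⟩ := hLι ⟨w.1, hwO, w.2⟩
        rw [e1, e2]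
        exact h1
      · -- w new
        set a : A := ⟨w, hwO⟩ with ha_def
        have hu : (⟨v.1, hvO, v.2⟩ : (O \ Z : Set U)) ∈ K a := hadj'.symm
        have h1 := hLnew a _ hu
        have e1 : L' v = L ⟨v.1, hvO, v.2⟩ := hLι ⟨v.1, hvO, v.2⟩
        rw [e1]
        have : L' w = L' a.1 := rfl
        rw [this]
        omega
    · have hwO : (w : U) ∈ O := hnew v.1 hvO w.1 hadj'
      set a : A := ⟨v, hvO⟩ with ha_def
      have hu : (⟨w.1, hwO, w.2⟩ : (O \ Z : Set U)) ∈ K a := hadj'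
      have h1 := hLnew a _ hu
      have e1 : L' w = L ⟨w.1, hwO, w.2⟩ := hLι ⟨w.1, hwO, w.2⟩
      rw [e1]
      have : L' v = L' a.1 := rfl
      rw [this]
      omega
  · -- bag sizes
    intro t' i
    cases t' with
    | inl t =>
      have hsub' : (bag' (Sum.inl t)) ∩ L' ⁻¹' {i} ⊆ ι '' (bag t ∩ L ⁻¹' {i}) := by
        rintro x ⟨⟨u', hu', rfl⟩, hL⟩
        refine ⟨u', ⟨hu', ?_⟩, rfl⟩
        have : L' (ι u') = i := hL
        rw [hLι u'] at this
        exact this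
      refine le_trans (Set.encard_mono hsub') ?_
      rw [(hinj.injOn).encard_image]
      refine le_trans (hbound t i) ?_
      exact_mod_cast Nat.le_succ p
    | inr a =>
      have hsub' : (bag' (Sum.inr a)) ∩ L' ⁻¹' {i} ⊆
          ι '' (bag (att a) ∩ L ⁻¹' {i}) ∪ {a.1} := by
        rintro x ⟨hx1, hx2⟩
        rcases hx1 with ⟨u', hu', rfl⟩ | hval
        · refine Or.inl ⟨u', ⟨hatt a u' hu', ?_⟩, rfl⟩
          have : L' (ι u') = i := hx2
          rw [hLι u'] at this
          exact this
        · exact Or.inr hval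
      refine le_trans (Set.encard_mono hsub') ?_
      refine le_trans (Set.encard_union_le _ _) ?_
      rw [(hinj.injOn).encard_image, Set.encard_singleton]
      push_cast
      gcongr
      exact hbound (att a) i
end

section
/- Let F be a class of graphs and n a nonnegative integer. Then asdim(F^{+n}) = asdim(F), where asdim denotes the asymptotic dimension of a graph class defined via common control functions. In particular asdim(F^{+n}) ≤ asdim(F) and, since F ⊆ F^{+n}, asdim(F) ≤ asdim(F^{+n}). -/
open SimpleGraph

-- helpers
lemma edist_map_le {V W : Type} {H : SimpleGraph V} {K : SimpleGraph W} (φ : V → W)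
    (hφ : ∀ a b, H.Adj a b → K.Adj (φ a) (φ b)) (a b : V) :
    K.edist (φ a) (φ b) ≤ H.edist a b := by
  by_cases h : H.edist a b = ⊤
  · simp [h]
  obtain ⟨p, hp⟩ := SimpleGraph.exists_walk_of_edist_ne_top h
  rw [← hp]
  clear hp h
  induction p with
  | nil => simp [SimpleGraph.edist_self]
  | @cons a x b hadj q ih =>
    calc K.edist (φ a) (φ b) ≤ K.edist (φ a) (φ x) + K.edist (φ x) (φ b) :=
          SimpleGraph.edist_triangle
    _ ≤ 1 + q.length := add_le_add
        (le_of_eq (SimpleGraph.edist_eq_one_iff_adj.mpr (hφ _ _ hadj))) ih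
    _ = ((SimpleGraph.Walk.cons hadj q).length : ℕ∞) := by
        simp [SimpleGraph.Walk.length_cons]; push_cast; ring

lemma edist_induce_avoid {V : Type} {G : SimpleGraph V} {Z : Set V} :
    ∀ {a b : V} (p : G.Walk a b), (∀ x ∈ p.support, x ∉ Z) →
    ∀ (ha : a ∈ {v : V | v ∉ Z}) (hb : b ∈ {v : V | v ∉ Z}),
    (G.induce {v : V | v ∉ Z}).edist ⟨a, ha⟩ ⟨b, hb⟩ ≤ p.length := by
  intro a b p
  induction p with
  | nil => intro _ ha hb; simp [SimpleGraph.edist_self]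
  | @cons a x b hadj q ih =>
    intro hsup ha hb
    have hx : x ∈ {v : V | v ∉ Z} := hsup x (by simp)
    have h1 : (G.induce {v : V | v ∉ Z}).Adj ⟨a, ha⟩ ⟨x, hx⟩ := hadj
    calc (G.induce {v : V | v ∉ Z}).edist ⟨a, ha⟩ ⟨b, hb⟩
        ≤ (G.induce {v : V | v ∉ Z}).edist ⟨a, ha⟩ ⟨x, hx⟩
          + (G.induce {v : V | v ∉ Z}).edist ⟨x, hx⟩ ⟨b, hb⟩ := SimpleGraph.edist_triangle
    _ ≤ 1 + q.length := add_le_add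
        (le_of_eq (SimpleGraph.edist_eq_one_iff_adj.mpr h1))
        (ih (fun y hy => hsup y (by simp [hy])) hx hb)
    _ = ((SimpleGraph.Walk.cons hadj q).length : ℕ∞) := by
        simp [SimpleGraph.Walk.length_cons]; push_cast; ring

lemma pow_edist_le_one {V : Type} {G : SimpleGraph V} {ℓ : ℕ} {a b : V}
    (h : G.edist a b ≤ ℓ) : (G.pow ℓ).edist a b ≤ 1 := by
  by_cases hab : a = b
  · subst hab; simp [SimpleGraph.edist_self]
  · exact le_of_eq (SimpleGraph.edist_eq_one_iff_adj.mpr ⟨hab, h⟩)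

lemma pow_subtype_le {V : Type} {G : SimpleGraph V} {Z : Set V} {ℓ : ℕ}
    (a b : {v : V | v ∉ Z}) :
    (G.pow ℓ).edist a.1 b.1 ≤ ((G.induce {v : V | v ∉ Z}).pow ℓ).edist a b := by
  apply edist_map_le Subtype.val
  rintro x y ⟨hne, hd⟩
  refine ⟨fun h => hne (Subtype.ext h), le_trans ?_ hd⟩
  exact edist_map_le Subtype.val (fun u v h => h) x y

-- the aux growth function
def gN (D : ℕ) : ℕ → ℕ
  | 0 => D
  | k + 1 => 2 * gN D k + 4

lemma le_gN (D : ℕ) : ∀ k, D ≤ gN D k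
  | 0 => le_refl _
  | k + 1 => le_trans (le_gN D k) (by simp [gN]; omega)

section Main

variable {V : Type} {G : SimpleGraph V} {Z : Set V} {ℓ m : ℕ} {c : V → Fin m}
  {c' : ↥{v : V | v ∉ Z} → Fin m} {D : ℕ}

/-- a `G^ℓ`-edge between vertices not in any ball around `Z` is an edge of `(G-Z)^ℓ`. -/
lemma typeA (hc : ∀ (a : V) (h : a ∉ Z), c a = c' ⟨a, h⟩)
    {a b : V} (hab : (G.pow ℓ).Adj a b) (hcol : c a = c b)
    (ha : ∀ z ∈ Z, ¬ G.edist z a ≤ ℓ) (ha' : a ∉ Z) (hb' : b ∉ Z) :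
    ((G.induce {v : V | v ∉ Z}).pow ℓ).Adj ⟨a, ha'⟩ ⟨b, hb'⟩ ∧
      c' ⟨a, ha'⟩ = c' ⟨b, hb'⟩ := by
  obtain ⟨hne, hd⟩ := hab
  have hdt : G.edist a b ≠ ⊤ := (hd.trans_lt (by simp)).ne
  obtain ⟨p, hp⟩ := SimpleGraph.exists_walk_of_edist_ne_top hdt
  constructor
  · by_cases hsup : ∀ x ∈ p.support, x ∉ Z
    · refine ⟨fun h => hne (congrArg Subtype.val h), ?_⟩
      calc (G.induce {v : V | v ∉ Z}).edist ⟨a, ha'⟩ ⟨b, hb'⟩ ≤ p.length :=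
            edist_induce_avoid p hsup ha' hb'
      _ = G.edist a b := hp
      _ ≤ ℓ := hd
    · exfalso
      push_neg at hsup
      obtain ⟨x, hxs, hxZ⟩ := hsup
      apply ha x hxZ
      rw [SimpleGraph.edist_comm]
      classical
      calc G.edist a x ≤ (p.takeUntil x hxs).length := SimpleGraph.edist_le _
      _ ≤ p.length := by exact_mod_cast p.length_takeUntil_le hxs
      _ = G.edist a b := hp
      _ ≤ ℓ := hd
  · rw [← hc a ha', ← hc b hb']; exact hcol

end Main

section Main2

variable {V : Type} {G : SimpleGraph V} {Z : Set V} {ℓ m : ℕ} {c : V → Fin m}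
  {c' : ↥{v : V | v ∉ Z} → Fin m} {D : ℕ}

lemma notZ_of_free {a : V} (h : ∀ z ∈ Z, ¬ G.edist z a ≤ ℓ) : a ∉ Z :=
  fun haZ => h a haZ (by simp [SimpleGraph.edist_self])

/-- base case: a monochromatic walk avoiding all the balls stays in `(G-Z)^ℓ`. -/
lemma base_case (hc : ∀ (a : V) (h : a ∉ Z), c a = c' ⟨a, h⟩)
    (hD : ∀ u v, MonoReach ((G.induce {v : V | v ∉ Z}).pow ℓ) c' u v →
      ((G.induce {v : V | v ∉ Z}).pow ℓ).edist u v ≤ (D : ℕ∞)) :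
    ∀ (l : List V) (u : V),
      List.Chain (fun a b => (G.pow ℓ).Adj a b ∧ c a = c b) u l →
      (∀ x ∈ u::l, ∀ z ∈ Z, ¬ G.edist z x ≤ ℓ) →
      (G.pow ℓ).edist u ((u::l).getLast (List.cons_ne_nil u l)) ≤ (D : ℕ∞) := by
  have key : ∀ (l : List V) (u : V),
      List.Chain (fun a b => (G.pow ℓ).Adj a b ∧ c a = c b) u l →
      (∀ x ∈ u::l, ∀ z ∈ Z, ¬ G.edist z x ≤ ℓ) →
      ∀ (hu : u ∉ Z) (hv : (u::l).getLast (List.cons_ne_nil u l) ∉ Z),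
      MonoReach ((G.induce {v : V | v ∉ Z}).pow ℓ) c' ⟨u, hu⟩
        ⟨(u::l).getLast (List.cons_ne_nil u l), hv⟩ := by
    intro l
    induction l with
    | nil => intro u _ _ hu hv; exact Relation.ReflTransGen.refl
    | cons b t ih =>
      intro u hch hfree hu hv
      have hb : b ∉ Z := notZ_of_free (hfree b (by simp))
      obtain ⟨hstep, hch'⟩ := List.chain_cons.mp hch
      have hedge := typeA hc hstep.1 hstep.2 (hfree u (by simp)) hu hb
      have htail := ih b hch' (fun x hx => hfree x (List.mem_cons_of_mem u hx)) hb (by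
          have : ((b::t).getLast (List.cons_ne_nil b t)) = ((u::b::t).getLast (by simp)) := by
            simp [List.getLast_cons]
          rw [this]; exact hv)
      refine Relation.ReflTransGen.head hedge ?_
      exact htail
  intro l u hch hfree
  have hu : u ∉ Z := notZ_of_free (hfree u (by simp))
  have hv : (u::l).getLast (List.cons_ne_nil u l) ∉ Z :=
    notZ_of_free (hfree _ (List.getLast_mem _))
  calc (G.pow ℓ).edist u ((u::l).getLast (List.cons_ne_nil u l))
      = (G.pow ℓ).edist (⟨u, hu⟩ : {v : V | v ∉ Z}).1 (⟨_, hv⟩ : {v : V | v ∉ Z}).1 := rfl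
  _ ≤ ((G.induce {v : V | v ∉ Z}).pow ℓ).edist ⟨u, hu⟩ ⟨_, hv⟩ := pow_subtype_le _ _
  _ ≤ (D : ℕ∞) := hD _ _ (key l u hch hfree hu hv)

end Main2

/-- last occurrence extraction for chains. -/
lemma last_occ {α : Type} {r : α → α → Prop} (P : α → Prop) :
    ∀ (l : List α) (u : α), List.Chain r u l → (∃ x ∈ u::l, P x) →
    ∃ (j : α) (l₂ : List α), List.Chain r j l₂ ∧ P j ∧ (∀ x ∈ l₂, ¬P x) ∧
      (j::l₂).getLast (List.cons_ne_nil j l₂) = (u::l).getLast (List.cons_ne_nil u l) ∧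
      (∀ x ∈ j::l₂, x ∈ u::l) := by
  intro l
  induction l with
  | nil =>
    intro u _ hex
    obtain ⟨x, hx, hPx⟩ := hex
    simp at hx; subst hx
    exact ⟨x, [], List.Chain.nil, hPx, by simp, rfl, by simp⟩
  | cons b t ih =>
    intro u hch hex
    obtain ⟨hstep, hch'⟩ := List.chain_cons.mp hch
    by_cases hbt : ∃ x ∈ b::t, P x
    · obtain ⟨j, l₂, h1, h2, h3, h4, h5⟩ := ih b hch' hbt
      exact ⟨j, l₂, h1, h2, h3, h4, fun x hx => List.mem_cons_of_mem u (h5 x hx)⟩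
    · push_neg at hbt
      have hPu : P u := by
        obtain ⟨x, hx, hPx⟩ := hex
        rcases List.mem_cons.mp hx with h | h
        · exact h ▸ hPx
        · exact absurd hPx (hbt x h)
      exact ⟨u, b::t, hch, hPu, hbt, rfl, fun x hx => hx⟩

/-- reversal of a chain of a symmetric relation. -/
lemma chain_rev {α : Type} {r : α → α → Prop} (hsym : ∀ a b, r a b → r b a)
    (l : List α) (u : α) (h : List.Chain r u l) :
    ∃ l' : List α,
      List.Chain r ((u::l).getLast (List.cons_ne_nil u l)) l' ∧
      ((((u::l).getLast (List.cons_ne_nil u l))) :: l').getLast (List.cons_ne_nil _ _) = u ∧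
      (∀ x, x ∈ (((u::l).getLast (List.cons_ne_nil u l)) :: l') ↔ x ∈ u :: l) := by
  have h' : List.Chain' r (u::l).reverse := by
    show List.IsChain r (u::l).reverse
    rw [List.isChain_reverse]
    exact List.Chain.imp (fun a b hab => hsym a b hab) h
  obtain ⟨v', t, hvt⟩ := List.exists_cons_of_ne_nil (by simp : (u::l).reverse ≠ [])
  have hv' : v' = (u::l).getLast (List.cons_ne_nil u l) := by
    have h1 : (u::l).getLast? = some v' := by
      rw [← List.head?_reverse, hvt]; rfl
    exact ((List.getLast_eq_iff_getLast?_eq_some _).mpr h1).symm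
  subst hv'
  refine ⟨t, ?_, ?_, ?_⟩
  · have h2 := h'
    rw [hvt] at h2
    exact h2
  · have h2 : ((u::l).getLast (List.cons_ne_nil u l) :: t).getLast? = some u := by
      rw [← hvt, List.getLast?_reverse]; rfl
    exact (List.getLast_eq_iff_getLast?_eq_some _).mpr h2
  · intro x
    constructor
    · intro hx
      have : x ∈ (u::l).reverse := by rw [hvt]; exact hx
      simpa [or_comm] using this
    · intro hx
      have : x ∈ (u::l).reverse := by simpa [or_comm] using hx
      rw [hvt] at this
      exact this

section Main3

variable {V : Type} {G : SimpleGraph V} {Z : Set V} {ℓ m : ℕ} {c : V → Fin m}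
  {c' : ↥{v : V | v ∉ Z} → Fin m} {D : ℕ}

lemma main_bound (hc : ∀ (a : V) (h : a ∉ Z), c a = c' ⟨a, h⟩)
    (hD : ∀ u v, MonoReach ((G.induce {v : V | v ∉ Z}).pow ℓ) c' u v →
      ((G.induce {v : V | v ∉ Z}).pow ℓ).edist u v ≤ (D : ℕ∞)) :
    ∀ (k : ℕ) (S : Set V), S.encard ≤ (k : ℕ∞) →
    ∀ (u : V) (l : List V),
      List.Chain (fun a b => (G.pow ℓ).Adj a b ∧ c a = c b) u l →
      (∀ x ∈ u::l, ∀ z ∈ Z, G.edist z x ≤ ℓ → z ∈ S) →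
      (G.pow ℓ).edist u ((u::l).getLast (List.cons_ne_nil u l)) ≤ (gN D k : ℕ∞) := by
  intro k
  induction k with
  | zero =>
    intro S hS u l hch htc
    have hSe : S = ∅ := by
      rw [← Set.encard_eq_zero]
      exact le_antisymm (by simpa using hS) (zero_le)
    have hfree : ∀ x ∈ u::l, ∀ z ∈ Z, ¬ G.edist z x ≤ ℓ := by
      intro x hx z hz hd
      have := htc x hx z hz hd
      rw [hSe] at this
      exact this
    exact base_case hc hD l u hch hfree
  | succ k ih =>
    intro S hS u l hch htc
    by_cases hex : ∃ z ∈ Z, ∃ x ∈ u::l, G.edist z x ≤ ℓ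
    · obtain ⟨z, hzZ, x, hx, hdx⟩ := hex
      have hzS : z ∈ S := htc x hx z hzZ hdx
      have hS' : (S \ {z}).encard ≤ (k : ℕ∞) := by
        have h1 := Set.encard_diff_singleton_add_one hzS
        have h2 : (S \ {z}).encard + 1 ≤ (k : ℕ∞) + 1 := by
          rw [h1]
          calc S.encard ≤ ((k+1 : ℕ) : ℕ∞) := hS
          _ = (k : ℕ∞) + 1 := by push_cast; ring
        exact (ENat.add_le_add_iff_right (by simp)).mp h2
      have helper : ∀ (j : V) (l₂ : List V),
          List.Chain (fun a b => (G.pow ℓ).Adj a b ∧ c a = c b) j l₂ →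
          (∀ y ∈ l₂, ¬ G.edist z y ≤ ℓ) →
          (∀ y ∈ j::l₂, ∀ z' ∈ Z, G.edist z' y ≤ ℓ → z' ∈ S) →
          (G.pow ℓ).edist j ((j::l₂).getLast (List.cons_ne_nil j l₂)) ≤ 1 + (gN D k : ℕ∞) := by
        intro j l₂ hch₂ hfree₂ htc₂
        cases l₂ with
        | nil => simp [SimpleGraph.edist_self]
        | cons b t =>
          obtain ⟨hstep, hch₃⟩ := List.chain_cons.mp hch₂
          have htc₃ : ∀ y ∈ b::t, ∀ z' ∈ Z, G.edist z' y ≤ ℓ → z' ∈ S \ {z} := by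
            intro y hy z' hz' hd'
            refine ⟨htc₂ y (List.mem_cons_of_mem j hy) z' hz' hd', ?_⟩
            simp only [Set.mem_singleton_iff]
            rintro rfl
            exact hfree₂ y hy hd'
          have hb := ih (S \ {z}) hS' b t hch₃ htc₃
          calc (G.pow ℓ).edist j ((j::b::t).getLast (List.cons_ne_nil j (b::t)))
              = (G.pow ℓ).edist j ((b::t).getLast (List.cons_ne_nil b t)) := by
                rw [List.getLast_cons_cons]
          _ ≤ (G.pow ℓ).edist j b + (G.pow ℓ).edist b ((b::t).getLast (List.cons_ne_nil b t)) :=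
                SimpleGraph.edist_triangle
          _ ≤ 1 + (gN D k : ℕ∞) := add_le_add
                (le_of_eq (SimpleGraph.edist_eq_one_iff_adj.mpr hstep.1)) hb
      obtain ⟨j, l₂, hch₂, hPj, hfree₂, hlast₂, hmem₂⟩ :=
        last_occ (fun y => G.edist z y ≤ ℓ) l u hch ⟨x, hx, hdx⟩
      have hjv := helper j l₂ hch₂ hfree₂
        (fun y hy z' hz' hd' => htc y (hmem₂ y hy) z' hz' hd')
      rw [hlast₂] at hjv
      have step_symm : ∀ a b : V, ((G.pow ℓ).Adj a b ∧ c a = c b) →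
          ((G.pow ℓ).Adj b a ∧ c b = c a) := fun a b h => ⟨h.1.symm, h.2.symm⟩
      obtain ⟨l', hch', hlast', hmem'⟩ := chain_rev step_symm l u hch
      obtain ⟨j₂, l₃, hch₃, hPj₂, hfree₃, hlast₃, hmem₃⟩ :=
        last_occ (fun y => G.edist z y ≤ ℓ) l' ((u::l).getLast (List.cons_ne_nil u l)) hch'
          ⟨x, (hmem' x).mpr hx, hdx⟩
      have hju := helper j₂ l₃ hch₃ hfree₃
        (fun y hy z' hz' hd' => htc y ((hmem' y).mp (hmem₃ y hy)) z' hz' hd')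
      rw [hlast₃, hlast'] at hju
      have h_uj2 : (G.pow ℓ).edist u j₂ ≤ 1 + (gN D k : ℕ∞) := by
        rw [SimpleGraph.edist_comm]; exact hju
      have hzj : (G.pow ℓ).edist z j ≤ 1 := pow_edist_le_one hPj
      have hzj₂ : (G.pow ℓ).edist j₂ z ≤ 1 := by
        rw [SimpleGraph.edist_comm]; exact pow_edist_le_one hPj₂
      calc (G.pow ℓ).edist u ((u::l).getLast (List.cons_ne_nil u l))
          ≤ (G.pow ℓ).edist u j₂ +
            (G.pow ℓ).edist j₂ ((u::l).getLast (List.cons_ne_nil u l)) :=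
            SimpleGraph.edist_triangle
      _ ≤ (G.pow ℓ).edist u j₂ + ((G.pow ℓ).edist j₂ z +
            ((G.pow ℓ).edist z j + (G.pow ℓ).edist j ((u::l).getLast (List.cons_ne_nil u l)))) := by
            refine add_le_add_right ?_ _
            calc (G.pow ℓ).edist j₂ ((u::l).getLast (List.cons_ne_nil u l))
                ≤ (G.pow ℓ).edist j₂ z +
                  (G.pow ℓ).edist z ((u::l).getLast (List.cons_ne_nil u l)) :=
                  SimpleGraph.edist_triangle
            _ ≤ (G.pow ℓ).edist j₂ z + ((G.pow ℓ).edist z j +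
                  (G.pow ℓ).edist j ((u::l).getLast (List.cons_ne_nil u l))) :=
                  add_le_add_right SimpleGraph.edist_triangle _
      _ ≤ (1 + (gN D k : ℕ∞)) + (1 + (1 + (1 + (gN D k : ℕ∞)))) :=
            add_le_add h_uj2 (add_le_add hzj₂ (add_le_add hzj hjv))
      _ = ((gN D (k+1) : ℕ) : ℕ∞) := by
            show _ = ((2 * gN D k + 4 : ℕ) : ℕ∞)
            push_cast
            ring
    · push_neg at hex
      have hbd := base_case hc hD l u hch (fun y hy z hz => not_le.mpr (hex z hz y hy))
      refine hbd.trans ?_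
      exact_mod_cast le_gN D (k+1)
end Main3


/-- `F` is `(m)`-colorable with uniformly bounded weak diameter on all powers:
the witness of `asdim(F) ≤ m − 1`. -/
def ClassWD (F : {V : Type} → SimpleGraph V → Prop) (m : ℕ) : Prop :=
  ∃ f : ℕ → ℕ, ∀ {V : Type} (G : SimpleGraph V), F G → ∀ ℓ : ℕ, 0 < ℓ →
    ∃ c : V → Fin m, ∀ u v, MonoReach (G.pow ℓ) c u v →
      (G.pow ℓ).edist u v ≤ ((f ℓ : ℕ) : ℕ∞)

/-- The asymptotic dimension of a class of graphs. -/
noncomputable def asdimClass (F : {V : Type} → SimpleGraph V → Prop) : ℕ∞ :=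
  sInf {n : ℕ∞ | ∃ k : ℕ, n = k ∧ ClassWD F (k + 1)}

/-- `F^{+n}` : graphs that are in `F` after deleting at most `n` vertices. -/
def Fplus (F : {V : Type} → SimpleGraph V → Prop) (n : ℕ) :
    {V : Type} → SimpleGraph V → Prop :=
  fun {V} G => ∃ Z : Set V, Z.encard ≤ (n : ℕ∞) ∧ F (G.induce {v | v ∉ Z})

section Final

/-- `G` is isomorphic to its induced subgraph on the complement of `∅`. -/
def isoEmptyCompl {V : Type} (G : SimpleGraph V) :
    G ≃g G.induce {v : V | v ∉ (∅ : Set V)} where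
  toFun v := ⟨v, Set.notMem_empty v⟩
  invFun x := x.1
  left_inv v := rfl
  right_inv x := rfl
  map_rel_iff' := Iff.rfl

lemma classWD_plus {F : {V : Type} → SimpleGraph V → Prop} {n k : ℕ}
    (h : ClassWD F (k+1)) : ClassWD (Fplus F n) (k+1) := by
  obtain ⟨f, hf⟩ := h
  refine ⟨fun ℓ => gN (f ℓ) n, ?_⟩
  intro V G hG ℓ hℓ
  obtain ⟨Z, hZ, hFd⟩ := hG
  obtain ⟨c', hc'⟩ := hf (G.induce {v | v ∉ Z}) hFd ℓ hℓ
  classical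
  refine ⟨fun v => if h : v ∈ Z then ⟨0, Nat.succ_pos k⟩ else c' ⟨v, h⟩, ?_⟩
  intro u v hreach
  obtain ⟨l, hl, hlast⟩ := List.exists_isChain_cons_of_relationReflTransGen hreach
  have hmb := main_bound (c := fun v => if h : v ∈ Z then ⟨0, Nat.succ_pos k⟩ else c' ⟨v, h⟩)
      (fun a ha => dif_neg ha) hc' n Z hZ u l hl (fun x _ z hz _ => hz)
  rw [hlast] at hmb
  exact hmb

lemma classWD_of_plus {F : {V : Type} → SimpleGraph V → Prop}
    (hiso : ∀ {V W : Type} (G : SimpleGraph V) (H : SimpleGraph W),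
      G ≃g H → F G → F H) {n k : ℕ}
    (h : ClassWD (Fplus F n) (k+1)) : ClassWD F (k+1) := by
  obtain ⟨f, hf⟩ := h
  refine ⟨f, ?_⟩
  intro V G hG ℓ hℓ
  exact hf G ⟨∅, by simp, hiso G _ (isoEmptyCompl G) hG⟩ ℓ hℓ

end Final

/-- Adding at most `n` apex vertices does not change the asymptotic dimension
of an (isomorphism-closed) class of graphs. -/
theorem stmt19 (F : {V : Type} → SimpleGraph V → Prop)
    (hiso : ∀ {V W : Type} (G : SimpleGraph V) (H : SimpleGraph W),
      G ≃g H → F G → F H)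
    (n : ℕ) :
    asdimClass (Fplus F n) = asdimClass F := by
  have key : ∀ k : ℕ, ClassWD (Fplus F n) (k+1) ↔ ClassWD F (k+1) :=
    fun k => ⟨fun h => classWD_of_plus hiso h, fun h => classWD_plus h⟩
  unfold asdimClass
  congr 1
  ext x
  simp only [Set.mem_setOf_eq]
  constructor
  · rintro ⟨k, rfl, h⟩; exact ⟨k, rfl, (key k).mp h⟩
  · rintro ⟨k, rfl, h⟩; exact ⟨k, rfl, (key k).mpr h⟩
end
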